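/- arXiv:1603.02856 — 8 statements merged into one kernel-verified Lean document; each statement's English description precedes it below -/
import Mathlib

section
/- The operator y is nilpotent: there exists a natural number n ≥ 1 with y^n = 0 (indeed y^n = 0 for every n > 2‖x‖, since n·y^n = y^n∘x − x∘y^n forces n‖y^n‖ ≤ 2‖x‖‖y^n‖). In particular the spectrum of y is {0}. -/
/-- Let `H` be a (nontrivial) complex Hilbert space and let `x, y` be bounded
linear operators on `H` satisfying `y ∘ x - x ∘ y = y`.  Then `y` is nilpotent: there is an
`n ≥ 1` with `yⁿ = 0`; indeed `yⁿ = 0` for every `n > 2‖x‖`.  In particular the spectrum of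
`y` is `{0}`. -/
theorem y_is_nilpotent_and_spectrum
    {H : Type*} [NormedAddCommGroup H] [InnerProductSpace ℂ H] [CompleteSpace H] [Nontrivial H]
    (x y : H →L[ℂ] H) (hcomm : y ∘L x - x ∘L y = y) :
    (∃ n : ℕ, 1 ≤ n ∧ y ^ n = 0) ∧
    (∀ n : ℕ, 2 * ‖x‖ < (n : ℝ) → y ^ n = 0) ∧
    spectrum ℂ y = {0} := by
  have hc : y * x - x * y = y := hcomm
  have key : ∀ n : ℕ, y ^ n * x - x * y ^ n = (n : ℂ) • y ^ n := by
    intro n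
    induction n with
    | zero => simp
    | succ n ih =>
      have hyx : y * x = x * y + y := by
        rw [sub_eq_iff_eq_add.mp hc]; exact add_comm _ _
      have step : y ^ (n + 1) * x
          = (n : ℂ) • y ^ (n + 1) + (x * y ^ (n + 1) + y ^ (n + 1)) := by
        calc y ^ (n + 1) * x = y * (y ^ n * x) := by rw [pow_succ', mul_assoc]
          _ = y * ((n : ℂ) • y ^ n + x * y ^ n) := by rw [sub_eq_iff_eq_add.mp ih]
          _ = (n : ℂ) • (y * y ^ n) + (y * x) * y ^ n := by
              rw [mul_add, mul_smul_comm, mul_assoc]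
          _ = (n : ℂ) • y ^ (n + 1) + (x * y + y) * y ^ n := by rw [← pow_succ', hyx]
          _ = (n : ℂ) • y ^ (n + 1) + (x * y ^ (n + 1) + y ^ (n + 1)) := by
              rw [add_mul, mul_assoc, ← pow_succ']
      rw [step]
      push_cast
      module
  have hzero : ∀ n : ℕ, 2 * ‖x‖ < (n : ℝ) → y ^ n = 0 := by
    intro n hn
    have hnorm : (n : ℝ) * ‖y ^ n‖ ≤ 2 * ‖x‖ * ‖y ^ n‖ := by
      have h1 : ‖(n : ℂ) • y ^ n‖ = (n : ℝ) * ‖y ^ n‖ := by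
        rw [norm_smul]; simp
      calc (n : ℝ) * ‖y ^ n‖ = ‖(n : ℂ) • y ^ n‖ := h1.symm
        _ = ‖y ^ n * x - x * y ^ n‖ := by rw [key n]
        _ ≤ ‖y ^ n * x‖ + ‖x * y ^ n‖ := norm_sub_le _ _
        _ ≤ ‖y ^ n‖ * ‖x‖ + ‖x‖ * ‖y ^ n‖ := add_le_add (norm_mul_le _ _) (norm_mul_le _ _)
        _ = 2 * ‖x‖ * ‖y ^ n‖ := by ring
    have hle : ‖y ^ n‖ ≤ 0 := by nlinarith [norm_nonneg (y ^ n)]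
    have := le_antisymm hle (norm_nonneg _)
    exact norm_eq_zero.mp this
  set N : ℕ := ⌊2 * ‖x‖⌋₊ + 1 with hN
  have hNlt : 2 * ‖x‖ < (N : ℝ) := by rw [hN]; push_cast; exact Nat.lt_floor_add_one (2 * ‖x‖)
  have hyN : y ^ N = 0 := hzero N hNlt
  refine ⟨⟨N, Nat.le_add_left 1 _, hyN⟩, hzero, ?_⟩
  have hspec : spectrum ℂ (y ^ N) = (· ^ N) '' spectrum ℂ y :=
    spectrum.map_pow_of_pos y (Nat.succ_pos _)
  rw [hyN, spectrum.zero_eq] at hspec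
  have hne : (spectrum ℂ y).Nonempty := spectrum.nonempty y
  apply Set.eq_singleton_iff_nonempty_unique_mem.mpr
  refine ⟨hne, fun μ hμ => ?_⟩
  have : μ ^ N ∈ ({0} : Set ℂ) := hspec ▸ Set.mem_image_of_mem _ hμ
  simpa using pow_eq_zero_iff (Nat.succ_ne_zero _) |>.mp (Set.mem_singleton_iff.mp this)
end

section
/- For every λ ∈ ℂ, the complex (C, d(λ)) is exact at the middle position (that is, ker d₀(λ) = ran d₁(λ)) if and only if the induced operator x̄ − λ : H/R(y) → H/R(y) is injective and the restriction of x−1−λ to ker(y) is a surjective map of ker(y) onto ker(y). -/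
/-- The operator induced on the quotient `H ⧸ S` by an operator leaving `S` invariant. -/
noncomputable def inducedOnQuotient {H : Type*} [NormedAddCommGroup H] [NormedSpace ℂ H]
    (S : Submodule ℂ H) (x : H →L[ℂ] H) (hx : ∀ v ∈ S, x v ∈ S) :
    (H ⧸ S) →L[ℂ] (H ⧸ S) where
  toLinearMap := Submodule.mapQ S S (x : H →ₗ[ℂ] H) (fun v hv => hx v hv)
  cont := by
    show Continuous (⇑(Submodule.mapQ S S (x : H →ₗ[ℂ] H) fun v hv => hx v hv))
    rw [← S.isOpenQuotientMap_mkQ.continuous_comp_iff]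
    have h : (⇑(Submodule.mapQ S S (x : H →ₗ[ℂ] H) fun v hv => hx v hv)) ∘ ⇑S.mkQ
        = ⇑S.mkQ ∘ ⇑x := by
      funext v
      simp [Submodule.mapQ_apply]
    rw [h]
    exact S.isOpenQuotientMap_mkQ.continuous.comp x.continuous

/-- Let `H` be a complex Hilbert space, `x, y` bounded operators on `H` with
`y ∘ x - x ∘ y = y` and `R(y)` closed.  For every `λ ∈ ℂ`, the complex
`0 → H →d₁(λ) H ⊕ H →d₀(λ) H → 0` is exact in the middle (i.e. `ker d₀(λ) = ran d₁(λ)`)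
iff the operator `x̄ - λ` induced on `H ⧸ R(y)` is injective and the restriction of
`x - 1 - λ` to `ker y` is a surjection of `ker y` onto `ker y`. -/
theorem middle_exactness_iff
    {H : Type*} [NormedAddCommGroup H] [InnerProductSpace ℂ H] [CompleteSpace H]
    (x y : H →L[ℂ] H) (hcomm : y ∘L x - x ∘L y = y)
    (hclosed : IsClosed ((LinearMap.range (y : H →ₗ[ℂ] H) : Submodule ℂ H) : Set H))
    (hran : ∀ v ∈ LinearMap.range (y : H →ₗ[ℂ] H), x v ∈ LinearMap.range (y : H →ₗ[ℂ] H)) :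
    ∀ l : ℂ,
      LinearMap.ker (y.coprod (x - l • (1 : H →L[ℂ] H)) : H × H →ₗ[ℂ] H) =
          LinearMap.range ((-(x - 1 - l • (1 : H →L[ℂ] H))).prod y : H →ₗ[ℂ] H × H) ↔
        (Function.Injective
            (fun v : H ⧸ LinearMap.range (y : H →ₗ[ℂ] H) =>
              inducedOnQuotient (LinearMap.range (y : H →ₗ[ℂ] H)) x hran v - l • v) ∧
          Set.SurjOn ⇑(x - 1 - l • (1 : H →L[ℂ] H))
            (LinearMap.ker (y : H →ₗ[ℂ] H) : Set H) (LinearMap.ker (y : H →ₗ[ℂ] H) : Set H)) := by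
  intro l
  set S : Submodule ℂ H := LinearMap.range (y : H →ₗ[ℂ] H) with hS
  set f : H →L[ℂ] H := x - 1 - l • (1 : H →L[ℂ] H) with hf
  have hfapp : ∀ v, f v = x v - v - l • v := fun v => by
    simp [hf, ContinuousLinearMap.sub_apply, ContinuousLinearMap.smul_apply,
      ContinuousLinearMap.one_apply]
  have key : ∀ v, x (y v) = y (x v) - y v := by
    intro v
    have h1 : (y ∘L x - x ∘L y) v = y v := by rw [hcomm]
    simp only [ContinuousLinearMap.sub_apply, ContinuousLinearMap.comp_apply] at h1
    have h2 := sub_eq_iff_eq_add.mp h1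
    rw [h2]; abel
  have key2 : ∀ v, x (y v) - l • (y v) = y (f v) := by
    intro v
    rw [key v, hfapp v, map_sub, map_sub, map_smul]
  have hG : ∀ v : H, inducedOnQuotient S x hran (S.mkQ v) = S.mkQ (x v) := fun v => rfl
  constructor
  · intro hex
    constructor
    · -- injectivity of the induced operator minus l
      intro u v huv
      obtain ⟨a, rfl⟩ := Submodule.mkQ_surjective S u
      obtain ⟨b, rfl⟩ := Submodule.mkQ_surjective S v
      dsimp only at huv
      rw [hG a, hG b] at huv
      have h3 : S.mkQ (x a - l • a) = S.mkQ (x b - l • b) := by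
        simp only [map_sub, map_smul]
        exact huv
      have h4 : (x a - l • a) - (x b - l • b) ∈ S := by
        rw [← Submodule.Quotient.eq S]
        simpa [Submodule.mkQ_apply] using h3
      have hmem : x (a - b) - l • (a - b) ∈ S := by
        have : x (a - b) - l • (a - b) = (x a - l • a) - (x b - l • b) := by
          rw [map_sub, smul_sub]; abel
        rw [this]; exact h4
      obtain ⟨w, hw⟩ := hmem
      have hker : ((-w, a - b) : H × H) ∈
          LinearMap.ker (y.coprod (x - l • (1 : H →L[ℂ] H)) : H × H →ₗ[ℂ] H) := by
        rw [LinearMap.mem_ker, ContinuousLinearMap.coe_coe, ContinuousLinearMap.coprod_apply]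
        have : (x - l • (1 : H →L[ℂ] H)) (a - b) = x (a - b) - l • (a - b) := by
          simp [ContinuousLinearMap.sub_apply, ContinuousLinearMap.smul_apply,
            ContinuousLinearMap.one_apply]
        rw [this, ← hw, map_neg, ContinuousLinearMap.coe_coe]
        abel
      rw [hex] at hker
      obtain ⟨c, hc⟩ := hker
      rw [ContinuousLinearMap.coe_coe, ContinuousLinearMap.prod_apply] at hc
      have hc2 : y c = a - b := congrArg Prod.snd hc
      rw [Submodule.mkQ_apply, Submodule.mkQ_apply, Submodule.Quotient.eq]
      exact ⟨c, hc2⟩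
    · -- surjectivity on ker y
      intro w hw
      have hw' : y w = 0 := hw
      have hker : ((w, 0) : H × H) ∈
          LinearMap.ker (y.coprod (x - l • (1 : H →L[ℂ] H)) : H × H →ₗ[ℂ] H) := by
        rw [LinearMap.mem_ker, ContinuousLinearMap.coe_coe, ContinuousLinearMap.coprod_apply, hw', map_zero, add_zero]
      rw [hex] at hker
      obtain ⟨c, hc⟩ := hker
      rw [ContinuousLinearMap.coe_coe, ContinuousLinearMap.prod_apply] at hc
      have hc1 : (-f) c = w := congrArg Prod.fst hc
      have hc2 : y c = 0 := congrArg Prod.snd hc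
      refine ⟨-c, ?_, ?_⟩
      · show -c ∈ LinearMap.ker (y : H →ₗ[ℂ] H)
        rw [LinearMap.mem_ker, map_neg, ContinuousLinearMap.coe_coe, hc2, neg_zero]
      · rw [map_neg]
        rw [ContinuousLinearMap.neg_apply] at hc1
        rw [← hc1]
  · rintro ⟨hinj, hsurj⟩
    apply le_antisymm
    · rintro ⟨a, b⟩ hab
      rw [LinearMap.mem_ker, ContinuousLinearMap.coe_coe, ContinuousLinearMap.coprod_apply] at hab
      have hab' : y a + (x b - l • b) = 0 := by
        have : (x - l • (1 : H →L[ℂ] H)) b = x b - l • b := by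
          simp [ContinuousLinearMap.sub_apply, ContinuousLinearMap.smul_apply,
            ContinuousLinearMap.one_apply]
        rw [← this]; exact hab
      have hmem : x b - l • b ∈ S := by
        refine ⟨-a, ?_⟩
        rw [map_neg, neg_eq_iff_add_eq_zero]
        exact hab'
      have hb0 : S.mkQ b = 0 := by
        apply hinj
        show inducedOnQuotient S x hran (S.mkQ b) - l • (S.mkQ b)
            = inducedOnQuotient S x hran 0 - l • (0 : H ⧸ S)
        rw [hG b, map_zero, smul_zero, sub_zero]
        have : S.mkQ (x b) - l • S.mkQ b = S.mkQ (x b - l • b) := by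
          rw [map_sub, map_smul]
        rw [this]
        rw [Submodule.mkQ_apply, Submodule.Quotient.mk_eq_zero]
        exact hmem
      have hbS : b ∈ S := by
        rwa [Submodule.mkQ_apply, Submodule.Quotient.mk_eq_zero] at hb0
      obtain ⟨c₀, hc₀⟩ := hbS
      rw [ContinuousLinearMap.coe_coe] at hc₀
      have hker2 : a + f c₀ ∈ (LinearMap.ker (y : H →ₗ[ℂ] H) : Set H) := by
        show y (a + f c₀) = 0
        rw [map_add, ← key2 c₀, hc₀]
        exact hab'
      obtain ⟨k, hk, hfk⟩ := hsurj hker2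
      refine ⟨c₀ - k, ?_⟩
      rw [ContinuousLinearMap.coe_coe, ContinuousLinearMap.prod_apply]
      have hyk : y k = 0 := hk
      have h1 : (-f) (c₀ - k) = a := by
        rw [ContinuousLinearMap.neg_apply, map_sub, neg_sub, hfk]
        abel
      have h2 : y (c₀ - k) = b := by rw [map_sub, hyk, sub_zero, hc₀]
      rw [h1, h2]
    · rintro ⟨p, q⟩ ⟨c, hc⟩
      rw [ContinuousLinearMap.coe_coe, ContinuousLinearMap.prod_apply] at hc
      have hc1 : (-f) c = p := congrArg Prod.fst hc
      have hc2 : y c = q := congrArg Prod.snd hc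
      rw [LinearMap.mem_ker, ContinuousLinearMap.coe_coe, ContinuousLinearMap.coprod_apply]
      rw [← hc1, ← hc2]
      rw [ContinuousLinearMap.neg_apply, map_neg]
      have : (x - l • (1 : H →L[ℂ] H)) (y c) = x (y c) - l • (y c) := by
        simp [ContinuousLinearMap.sub_apply, ContinuousLinearMap.smul_apply,
          ContinuousLinearMap.one_apply]
      rw [this, key2 c]
      abel
end

section
/- The set of λ ∈ ℂ for which the complex (C, d(λ)) fails to be exact (i.e., d₁(λ) is not injective, or ker d₀(λ) ≠ ran d₁(λ), or d₀(λ) is not surjective) equals σ((x−1)|_{ker y}) ∪ σ(x̄), the union of the spectrum of the restriction of x−1 to the Hilbert space ker(y) and the spectrum of the operator x̄ induced by x on the Banach space H/R(y). (Equivalently, in terms of the dual basis of {y,x}, the joint spectrum of the Lie algebra is Sp((y,x),H) = {0} × (Sp(x−1, ker y) ∪ Sp(x̄, H/R(y))).) -/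
/-- The restriction of an operator to an invariant closed subspace. -/
def restrictOp {H : Type*} [NormedAddCommGroup H] [NormedSpace ℂ H]
    (K : Submodule ℂ H) (x : H →L[ℂ] H) (hx : ∀ v ∈ K, x v ∈ K) : K →L[ℂ] K :=
  (x.comp K.subtypeL).codRestrict K (fun v => hx v v.2)

section helpers

variable {H : Type*} [NormedAddCommGroup H] [NormedSpace ℂ H] [CompleteSpace H]

lemma quot_isUnit_iff (S : Submodule ℂ H) (hS : IsClosed (S : Set H))
    (T : (H ⧸ S) →L[ℂ] (H ⧸ S)) : IsUnit T ↔ Function.Bijective T := by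
  haveI : IsClosed (S : Set H) := hS
  exact ContinuousLinearMap.isUnit_iff_bijective

lemma ker_isUnit_iff (y : H →L[ℂ] H) (T : (LinearMap.ker (y : H →ₗ[ℂ] H)) →L[ℂ] (LinearMap.ker (y : H →ₗ[ℂ] H))) :
    IsUnit T ↔ Function.Bijective T := by
  haveI : CompleteSpace (LinearMap.ker (y : H →ₗ[ℂ] H)) := (ContinuousLinearMap.isClosed_ker y).completeSpace_coe
  exact ContinuousLinearMap.isUnit_iff_bijective

lemma bij_neg {E : Type*} [NormedAddCommGroup E] [NormedSpace ℂ E] (T : E →L[ℂ] E) :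
    Function.Bijective ⇑(-T) ↔ Function.Bijective ⇑T := by
  have h : ⇑(-T) = (fun z : E => -z) ∘ ⇑T := by funext z; simp
  rw [h]
  exact (Equiv.neg E).comp_bijective ⇑T

end helpers

/-- Let `H` be a complex Hilbert space, `x, y` bounded operators on `H` with
`y ∘ x - x ∘ y = y` and `R(y)` closed.  The set of `λ ∈ ℂ` at which the complex
`0 → H →d₁(λ) H ⊕ H →d₀(λ) H → 0` fails to be exact equals
`σ((x-1)|_{ker y}) ∪ σ(x̄)`, where `x̄` is the operator induced by `x` on `H ⧸ R(y)`.
Equivalently, `Sp((y,x),H) = {0} × (Sp(x-1, ker y) ∪ Sp(x̄, H ⧸ R(y)))`. -/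
theorem joint_spectrum_eq
    {H : Type*} [NormedAddCommGroup H] [InnerProductSpace ℂ H] [CompleteSpace H]
    (x y : H →L[ℂ] H) (hcomm : y ∘L x - x ∘L y = y)
    (hclosed : IsClosed ((LinearMap.range (y : H →ₗ[ℂ] H) : Submodule ℂ H) : Set H))
    (hran : ∀ v ∈ LinearMap.range (y : H →ₗ[ℂ] H), x v ∈ LinearMap.range (y : H →ₗ[ℂ] H))
    (hker : ∀ a ∈ LinearMap.ker (y : H →ₗ[ℂ] H), (x - 1) a ∈ LinearMap.ker (y : H →ₗ[ℂ] H)) :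
    {l : ℂ |
        ¬ (Function.Injective ⇑((-(x - 1 - l • (1 : H →L[ℂ] H))).prod y) ∧
          LinearMap.ker ((y.coprod (x - l • (1 : H →L[ℂ] H)) : H × H →L[ℂ] H) : H × H →ₗ[ℂ] H) =
            LinearMap.range (((-(x - 1 - l • (1 : H →L[ℂ] H))).prod y : H →L[ℂ] H × H) : H →ₗ[ℂ] H × H) ∧
          Function.Surjective ⇑(y.coprod (x - l • (1 : H →L[ℂ] H))))} =
      spectrum ℂ (restrictOp (LinearMap.ker (y : H →ₗ[ℂ] H)) (x - 1) hker) ∪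
        spectrum ℂ (inducedOnQuotient (LinearMap.range (y : H →ₗ[ℂ] H)) x hran) := by
  set S : Submodule ℂ H := LinearMap.range (y : H →ₗ[ℂ] H) with hS
  set K : Submodule ℂ H := LinearMap.ker (y : H →ₗ[ℂ] H) with hK
  set A : K →L[ℂ] K := restrictOp (LinearMap.ker (y : H →ₗ[ℂ] H)) (x - 1) hker with hA
  set B : (H ⧸ S) →L[ℂ] (H ⧸ S) := inducedOnQuotient (LinearMap.range (y : H →ₗ[ℂ] H)) x hran with hB
  -- commutation, pointwise
  have hcomm' : ∀ c : H, y (x c) - x (y c) = y c := by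
    intro c
    have := ContinuousLinearMap.ext_iff.mp hcomm c
    simpa using this
  ext l
  simp only [Set.mem_setOf_eq, Set.mem_union]
  set u : H →L[ℂ] H := x - 1 - l • (1 : H →L[ℂ] H) with hu
  set v : H →L[ℂ] H := x - l • (1 : H →L[ℂ] H) with hv
  have hu' : ∀ c : H, u c = x c - c - l • c := by intro c; simp [hu]
  have hv' : ∀ c : H, v c = x c - l • c := by intro c; simp [hv]
  have hyu : ∀ c : H, y (u c) = v (y c) := by
    intro c
    have h2 : y (x c) = y c + x (y c) := sub_eq_iff_eq_add.mp (hcomm' c)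
    rw [hu', hv']
    simp only [map_sub, map_smul]
    rw [h2]
    abel
  set Al : K →L[ℂ] K := A - l • (1 : K →L[ℂ] K) with hAl'
  set Bl : (H ⧸ S) →L[ℂ] (H ⧸ S) := B - l • (1 : (H ⧸ S) →L[ℂ] (H ⧸ S)) with hBl'
  have hAl : ∀ k : K, ((Al k : H)) = u (k : H) := by
    intro k
    rw [hAl']
    simp [hA, restrictOp, hu']
  have hBl : ∀ h : H, Bl (Submodule.Quotient.mk h) = Submodule.Quotient.mk (v h) := by
    intro h
    rw [hBl']
    have h1 : B (Submodule.Quotient.mk h) = Submodule.Quotient.mk (x h) := by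
      show (inducedOnQuotient (LinearMap.range (y : H →ₗ[ℂ] H)) x hran) (Submodule.Quotient.mk h)
          = Submodule.Quotient.mk (x h)
      have : (inducedOnQuotient (LinearMap.range (y : H →ₗ[ℂ] H)) x hran) (Submodule.Quotient.mk h)
          = Submodule.mapQ S S (x : H →ₗ[ℂ] H) (fun w hw => hran w hw) (Submodule.Quotient.mk h) :=
        rfl
      rw [this, Submodule.mapQ_apply]
      rfl
    simp only [ContinuousLinearMap.sub_apply, ContinuousLinearMap.smul_apply,
      ContinuousLinearMap.one_apply, h1, hv']
    rw [← Submodule.Quotient.mk_smul, ← Submodule.Quotient.mk_sub]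
  set D1 : H →L[ℂ] H × H := (-u).prod y with hD1def
  set D0 : H × H →L[ℂ] H := y.coprod v with hD0def
  have hD1 : ∀ c : H, D1 c = (-(u c), y c) := by
    intro c; rw [hD1def]; simp
  have hD0 : ∀ p : H × H, D0 p = y p.1 + v p.2 := by
    intro p; rw [hD0def]; simp
  have hyk : ∀ k : K, y (k : H) = 0 := fun k => LinearMap.mem_ker.mp k.2
  -- e1
  have e1 : Function.Injective ⇑D1 ↔ Function.Injective ⇑Al := by
    constructor
    · intro h1 k k' hkk
      have hco : u (k : H) = u (k' : H) := by
        have h := congrArg Subtype.val hkk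
        rwa [hAl, hAl] at h
      have : (k : H) = (k' : H) := h1 (by rw [hD1, hD1, hco, hyk, hyk])
      exact Subtype.ext this
    · intro h1
      rw [injective_iff_map_eq_zero]
      intro c hc
      rw [hD1] at hc
      have hfst : -(u c) = 0 := congrArg Prod.fst hc
      have hsnd : y c = 0 := congrArg Prod.snd hc
      have hcK : c ∈ K := LinearMap.mem_ker.mpr hsnd
      have hz : Al ⟨c, hcK⟩ = 0 := by
        apply Subtype.ext
        rw [hAl]
        simpa using hfst
      have := (injective_iff_map_eq_zero Al).mp h1 _ hz
      exact congrArg Subtype.val this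
  -- e2
  have e2 : Function.Surjective ⇑D0 ↔ Function.Surjective ⇑Bl := by
    constructor
    · intro hs q
      obtain ⟨h, rfl⟩ := Submodule.Quotient.mk_surjective S q
      obtain ⟨⟨a, b⟩, hab⟩ := hs h
      rw [hD0] at hab
      refine ⟨Submodule.Quotient.mk b, ?_⟩
      rw [hBl]
      rw [Submodule.Quotient.eq]
      refine ⟨-a, ?_⟩
      rw [map_neg, ContinuousLinearMap.coe_coe]
      rw [show v b - h = -(y a) by rw [← hab]; abel]
    · intro hs h
      obtain ⟨q, hq⟩ := hs (Submodule.Quotient.mk h)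
      obtain ⟨b, rfl⟩ := Submodule.Quotient.mk_surjective S q
      rw [hBl] at hq
      have hvb : v b - h ∈ S := (Submodule.Quotient.eq S).mp hq
      obtain ⟨a, ha⟩ := neg_mem hvb
      refine ⟨(a, b), ?_⟩
      rw [hD0]
      simp only
      rw [ContinuousLinearMap.coe_coe] at ha
      rw [ha]
      abel
  -- e3
  have e3 : LinearMap.ker (D0 : H × H →ₗ[ℂ] H) = LinearMap.range (D1 : H →ₗ[ℂ] H × H) ↔
      (Function.Surjective ⇑Al ∧ Function.Injective ⇑Bl) := by
    constructor
    · intro h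
      constructor
      · intro k
        have hk : ((-(k : H), (0 : H)) : H × H) ∈ LinearMap.ker (D0 : H × H →ₗ[ℂ] H) := by
          rw [LinearMap.mem_ker, ContinuousLinearMap.coe_coe, hD0]
          simp [hyk k]
        rw [h] at hk
        obtain ⟨c, hc⟩ := hk
        rw [ContinuousLinearMap.coe_coe, hD1] at hc
        have h1 : -(u c) = -(k : H) := congrArg Prod.fst hc
        have h2 : y c = 0 := congrArg Prod.snd hc
        refine ⟨⟨c, LinearMap.mem_ker.mpr h2⟩, ?_⟩
        apply Subtype.ext
        rw [hAl]
        exact neg_injective h1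
      · rw [injective_iff_map_eq_zero]
        intro q hq
        obtain ⟨b, rfl⟩ := Submodule.Quotient.mk_surjective S q
        rw [hBl, Submodule.Quotient.mk_eq_zero] at hq
        obtain ⟨a', ha'⟩ := hq
        have hker0 : ((-a', b) : H × H) ∈ LinearMap.ker (D0 : H × H →ₗ[ℂ] H) := by
          rw [LinearMap.mem_ker, ContinuousLinearMap.coe_coe, hD0]
          simp only [map_neg]
          rw [ContinuousLinearMap.coe_coe] at ha'
          rw [ha']
          abel
        rw [h] at hker0
        obtain ⟨c, hc⟩ := hker0
        rw [ContinuousLinearMap.coe_coe, hD1] at hc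
        have h2 : y c = b := congrArg Prod.snd hc
        rw [Submodule.Quotient.mk_eq_zero]
        exact ⟨c, h2⟩
    · rintro ⟨hAsurj, hBinj⟩
      apply le_antisymm
      · rintro ⟨a, b⟩ hp
        have hab : y a + v b = 0 := by
          have := LinearMap.mem_ker.mp hp
          rwa [ContinuousLinearMap.coe_coe, hD0] at this
        have hbS : b ∈ S := by
          rw [← Submodule.Quotient.mk_eq_zero]
          apply hBinj
          rw [hBl, map_zero, Submodule.Quotient.mk_eq_zero]
          exact ⟨-a, by rw [map_neg, ContinuousLinearMap.coe_coe, eq_neg_of_add_eq_zero_left hab, neg_neg]⟩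
        obtain ⟨c₀, hc₀⟩ := hbS
        rw [ContinuousLinearMap.coe_coe] at hc₀
        have hmem : a + u c₀ ∈ K := by
          apply LinearMap.mem_ker.mpr
          rw [map_add, ContinuousLinearMap.coe_coe, hyu, hc₀, hab]
        obtain ⟨k, hk⟩ := hAsurj ⟨-(a + u c₀), neg_mem hmem⟩
        have hk' : u (k : H) = -(a + u c₀) := by
          have := congrArg Subtype.val hk
          rwa [hAl] at this
        refine ⟨c₀ + (k : H), ?_⟩
        rw [ContinuousLinearMap.coe_coe, hD1]
        have hfst : -(u (c₀ + (k : H))) = a := by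
          rw [map_add, hk']
          abel
        have hsnd : y (c₀ + (k : H)) = b := by
          rw [map_add, hc₀, hyk k, add_zero]
        rw [hfst, hsnd]
      · rintro p ⟨c, rfl⟩
        rw [LinearMap.mem_ker, ContinuousLinearMap.coe_coe, ContinuousLinearMap.coe_coe, hD1, hD0]
        simp only [map_neg]
        rw [hyu]
        abel
  -- spectra
  have sA : l ∈ spectrum ℂ A ↔ ¬ Function.Bijective ⇑Al := by
    rw [spectrum.mem_iff]
    have hrw : (algebraMap ℂ (K →L[ℂ] K)) l - A = -Al := by
      rw [hAl', Algebra.algebraMap_eq_smul_one, neg_sub]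
    rw [hrw, ker_isUnit_iff y, bij_neg]
  have sB : l ∈ spectrum ℂ B ↔ ¬ Function.Bijective ⇑Bl := by
    rw [spectrum.mem_iff]
    have hrw : (algebraMap ℂ ((H ⧸ S) →L[ℂ] (H ⧸ S))) l - B = -Bl := by
      rw [hBl', Algebra.algebraMap_eq_smul_one, neg_sub]
    rw [hrw, quot_isUnit_iff S hclosed, bij_neg]
  have main : (Function.Injective ⇑D1 ∧ LinearMap.ker (D0 : H × H →ₗ[ℂ] H) = LinearMap.range (D1 : H →ₗ[ℂ] H × H) ∧
      Function.Surjective ⇑D0) ↔ (Function.Bijective ⇑Al ∧ Function.Bijective ⇑Bl) := by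
    constructor
    · rintro ⟨h1, h3, h2⟩
      obtain ⟨hs, hi⟩ := e3.mp h3
      exact ⟨⟨e1.mp h1, hs⟩, ⟨hi, e2.mp h2⟩⟩
    · rintro ⟨⟨ai, as⟩, bi, bs⟩
      exact ⟨e1.mpr ai, e3.mpr ⟨as, bi⟩, e2.mpr bs⟩
  rw [sA, sB, ← not_and_or]
  exact not_congr main
end

section
/- For every λ ∈ ℂ, the range of d₁(λ) is a closed subspace of H ⊕ H if and only if (x−1−λ)(ker(y)) is a closed subspace of ker(y). -/
/-- Let `H` be a complex Hilbert space, `x, y` bounded operators on `H` with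
`y ∘ x - x ∘ y = y` and `R(y)` closed.  For every `λ ∈ ℂ`, the range of
`d₁(λ) : H → H ⊕ H`, `c ↦ (-(x - 1 - λ)(c), y(c))`, is closed in `H ⊕ H` iff
`(x - 1 - λ)(ker y)` is closed (as a subspace of the closed subspace `ker y`,
equivalently closed in `H`). -/
theorem range_d1_closed_iff
    {H : Type*} [NormedAddCommGroup H] [InnerProductSpace ℂ H] [CompleteSpace H]
    (x y : H →L[ℂ] H) (hcomm : y ∘L x - x ∘L y = y)
    (hclosed : IsClosed ((LinearMap.range (y : H →ₗ[ℂ] H) : Submodule ℂ H) : Set H)) :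
    ∀ l : ℂ,
      IsClosed (Set.range ⇑((-(x - 1 - l • (1 : H →L[ℂ] H))).prod y)) ↔
      IsClosed (⇑(x - 1 - l • (1 : H →L[ℂ] H)) '' (LinearMap.ker (y : H →ₗ[ℂ] H) : Set H)) := by
  intro l
  set T : H →L[ℂ] H := x - 1 - l • (1 : H →L[ℂ] H) with hT
  set K : Submodule ℂ H := LinearMap.ker (y : H →ₗ[ℂ] H) with hK
  set R : Submodule ℂ H := LinearMap.range (y : H →ₗ[ℂ] H) with hR
  haveI : CompleteSpace R := hclosed.completeSpace_coe
  haveI : CompleteSpace K := (ContinuousLinearMap.isClosed_ker y).completeSpace_coe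
  haveI : CompleteSpace (Kᗮ : Submodule ℂ H) := K.isClosed_orthogonal.completeSpace_coe
  -- the restriction of `y` to `Kᗮ`, as a map onto `R`
  set f : (Kᗮ : Submodule ℂ H) →L[ℂ] R :=
    (y ∘L Kᗮ.subtypeL).codRestrict R (fun z => ⟨(z : H), rfl⟩) with hf
  have hf_apply : ∀ z : Kᗮ, (f z : H) = y (z : H) := fun z => rfl
  have hinj : LinearMap.ker (f : (Kᗮ : Submodule ℂ H) →ₗ[ℂ] R) = ⊥ := by
    rw [LinearMap.ker_eq_bot]
    intro a b hab
    have ha : y (a : H) = y (b : H) := congrArg Subtype.val hab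
    have hmem : ((a : H) - (b : H)) ∈ K ⊓ Kᗮ :=
      Submodule.mem_inf.mpr
        ⟨LinearMap.mem_ker.mpr (by rw [ContinuousLinearMap.coe_coe, ContinuousLinearMap.map_sub, ha, sub_self]),
         Submodule.sub_mem _ a.2 b.2⟩
    rw [Submodule.inf_orthogonal_eq_bot K, Submodule.mem_bot] at hmem
    exact Subtype.ext (sub_eq_zero.mp hmem)
  have hsurj : LinearMap.range (f : (Kᗮ : Submodule ℂ H) →ₗ[ℂ] R) = ⊤ := by
    rw [LinearMap.range_eq_top]
    rintro ⟨b, c, rfl⟩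
    have hc : c ∈ K ⊔ Kᗮ := by
      rw [Submodule.sup_orthogonal_of_hasOrthogonalProjection]; trivial
    rcases Submodule.mem_sup.mp hc with ⟨k, hk, p, hp, rfl⟩
    refine ⟨⟨p, hp⟩, ?_⟩
    apply Subtype.ext
    have hyk : y k = 0 := hk
    simp [hf_apply, map_add, hyk]
  set e : (Kᗮ : Submodule ℂ H) ≃L[ℂ] R := ContinuousLinearEquiv.ofBijective f hinj hsurj
    with he
  have he_apply : ∀ z : Kᗮ, e z = f z := fun z => rfl
  -- the bounded linear right inverse of `y`
  set σ : H →L[ℂ] H :=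
    Kᗮ.subtypeL ∘L (e.symm : R →L[ℂ] (Kᗮ : Submodule ℂ H)) ∘L R.orthogonalProjectionOnto with hσ
  have hyσ : ∀ c : H, y (σ (y c)) = y c := by
    intro c
    have hmem : y c ∈ R := ⟨c, rfl⟩
    have hproj : R.orthogonalProjectionOnto (y c) = ⟨y c, hmem⟩ :=
      Subtype.ext (Submodule.starProjection_eq_self_iff.mpr hmem)
    have hσc : σ (y c) = ((e.symm ⟨y c, hmem⟩ : Kᗮ) : H) := by
      simp [hσ, hproj]
    rw [hσc]
    have h1 := e.apply_symm_apply ⟨y c, hmem⟩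
    rw [he_apply] at h1
    have h2 := congrArg Subtype.val h1
    rw [hf_apply] at h2
    exact h2
  -- the automorphism `F (u, v) = (u + T (σ v), v)` of `H × H`
  set F : (H × H) ≃L[ℂ] (H × H) :=
    ContinuousLinearEquiv.equivOfInverse
      ((ContinuousLinearMap.fst ℂ H H +
          (T ∘L σ) ∘L ContinuousLinearMap.snd ℂ H H).prod (ContinuousLinearMap.snd ℂ H H))
      ((ContinuousLinearMap.fst ℂ H H -
          (T ∘L σ) ∘L ContinuousLinearMap.snd ℂ H H).prod (ContinuousLinearMap.snd ℂ H H))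
      (fun p => by
        apply Prod.ext <;>
          simp [ContinuousLinearMap.prod_apply])
      (fun p => by
        apply Prod.ext <;>
          simp [ContinuousLinearMap.prod_apply]) with hF
  have hF_apply : ∀ p : H × H, F p = (p.1 + T (σ p.2), p.2) := fun p => rfl
  clear_value f e σ F
  clear hf he hF hσ he_apply hf_apply hinj hsurj
  -- the image of the range of `d₁` under `F` is a product
  have himage :
      ⇑F '' Set.range ⇑((-T).prod y) =
        ((fun h => -h) '' (⇑T '' (K : Set H))) ×ˢ (R : Set H) := by
    ext p
    have hd : ∀ c : H, ((-T).prod y) c = (-(T c), y c) := fun c => by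
      rw [ContinuousLinearMap.prod_apply, ContinuousLinearMap.neg_apply]
    constructor
    · rintro ⟨-, ⟨c, rfl⟩, rfl⟩
      rw [hd, hF_apply]
      constructor
      · refine ⟨T (c - σ (y c)), ⟨c - σ (y c), ?_, rfl⟩, ?_⟩
        · show c - σ (y c) ∈ K
          exact LinearMap.mem_ker.mpr
            (by rw [ContinuousLinearMap.coe_coe, ContinuousLinearMap.map_sub, hyσ c, sub_self])
        · show -(T (c - σ (y c))) = -(T c) + T (σ (y c))
          rw [ContinuousLinearMap.map_sub]
          abel
      · exact ⟨c, rfl⟩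
    · rintro ⟨⟨a, ⟨k, hk, rfl⟩, h1⟩, c, h2⟩
      refine ⟨((-T).prod y) (k + σ (y c)), ⟨k + σ (y c), rfl⟩, ?_⟩
      have hyk : y k = 0 := hk
      have hyc : y (k + σ (y c)) = y c := by
        rw [ContinuousLinearMap.map_add, hyk, hyσ c, zero_add]
      rw [hd, hF_apply]
      have h1' : -(T k) = p.1 := h1
      apply Prod.ext
      · show -(T (k + σ (y c))) + T (σ (y (k + σ (y c)))) = p.1
        rw [hyc, ← h1', ContinuousLinearMap.map_add]
        abel
      · exact hyc.trans h2
  -- transfer closedness across `F`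
  rw [← Homeomorph.isClosed_image F.toHomeomorph,
    show ⇑F.toHomeomorph = ⇑F from rfl, himage]
  constructor
  · intro h
    have h0 : (0 : H) ∈ (R : Set H) := R.zero_mem
    have heq : ((fun h => -h) '' (⇑T '' (K : Set H)))
        = (fun a => (a, (0 : H))) ⁻¹'
          (((fun h => -h) '' (⇑T '' (K : Set H))) ×ˢ (R : Set H)) := by
      ext a; simp [h0]
    have h2 : IsClosed ((fun h : H => -h) '' (⇑T '' (K : Set H))) := by
      rw [heq]
      exact h.preimage (continuous_id.prodMk continuous_const)
    have h3 := (Homeomorph.neg H).isClosedMap _ h2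
    simpa [Set.image_image] using h3
  · intro h
    have h1 : IsClosed ((fun h : H => -h) '' (⇑T '' (K : Set H))) :=
      (Homeomorph.neg H).isClosedMap _ h
    exact h1.prod hclosed
end

section
/- For every λ ∈ ℂ, the following are equivalent: (a) d₁(λ) is injective, ker d₀(λ) = ran d₁(λ), and the range of d₀(λ) is closed; (b) the restriction of x−1−λ to ker(y) is a bijection of ker(y) onto ker(y), and the induced operator x̄ − λ on H/R(y) is bounded below (injective with closed range). (Equivalently, σ_{π,1}((y,x),H) = {0} × (Sp(x−1, ker y) ∪ Π(x̄, H/R(y))).) -/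
open ContinuousLinearMap

/-- A bounded-below continuous linear map into a "separated" seminormed space has
closed range. -/
lemma auxIsClosedRangeOfBddBelow {E F : Type*} [SeminormedAddCommGroup E] [NormedSpace ℂ E]
    [CompleteSpace E] [SeminormedAddCommGroup F] [NormedSpace ℂ F]
    (hsep : ∀ w : F, ‖w‖ = 0 → w = 0)
    (f : E →L[ℂ] F) {c : ℝ} (hc : 0 < c) (h : ∀ v, c * ‖v‖ ≤ ‖f v‖) :
    IsClosed (Set.range ⇑f) := by
  refine IsSeqClosed.isClosed ?_
  intro u p hu hup
  choose v hv using hu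
  have hcauchy : CauchySeq v := by
    rw [Metric.cauchySeq_iff]
    intro ε hε
    have hcu : CauchySeq u := hup.cauchySeq
    rw [Metric.cauchySeq_iff] at hcu
    obtain ⟨N, hN⟩ := hcu (c * ε) (by positivity)
    refine ⟨N, fun m hm n hn => ?_⟩
    have h1 := h (v m - v n)
    rw [map_sub, hv, hv] at h1
    have h2 := hN m hm n hn
    rw [dist_eq_norm] at h2 ⊢
    nlinarith [norm_nonneg (v m - v n)]
  obtain ⟨x, hx⟩ := cauchySeq_tendsto_of_complete hcauchy
  refine ⟨x, ?_⟩
  have hfx : Filter.Tendsto (fun n => f (v n)) Filter.atTop (nhds (f x)) :=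
    (f.continuous.tendsto x).comp hx
  have htu : Filter.Tendsto u Filter.atTop (nhds (f x)) := by simpa [hv] using hfx
  have h1 : Filter.Tendsto (fun n => dist (u n) (f x)) Filter.atTop (nhds 0) :=
    tendsto_iff_dist_tendsto_zero.mp htu
  have h2 : Filter.Tendsto (fun n => dist (u n) p) Filter.atTop (nhds 0) :=
    tendsto_iff_dist_tendsto_zero.mp hup
  have h3 : Filter.Tendsto (fun n => dist (u n) (f x) + dist (u n) p)
      Filter.atTop (nhds 0) := by simpa using h1.add h2
  have h4 : dist (f x) p ≤ 0 :=
    ge_of_tendsto' h3 (fun n => dist_triangle_left (f x) p (u n))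
  have h5 : ‖f x - p‖ = 0 := by
    rw [← dist_eq_norm]
    exact le_antisymm h4 dist_nonneg
  exact sub_eq_zero.mp (hsep _ h5)

/-- An injective endomorphism of a Banach space with closed range is bounded below. -/
lemma auxBddBelowOfInjClosedRange {E : Type*} [NormedAddCommGroup E] [NormedSpace ℂ E]
    [CompleteSpace E] (f : E →L[ℂ] E) (hinj : Function.Injective ⇑f)
    (hcl : IsClosed (Set.range ⇑f)) : ∃ c : ℝ, 0 < c ∧ ∀ v, c * ‖v‖ ≤ ‖f v‖ := by
  set K : Submodule ℂ E := LinearMap.range (f : E →ₗ[ℂ] E) with hK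
  have hKcl : IsClosed (K : Set E) := by
    have : (K : Set E) = Set.range ⇑f := by
      ext w; simp [hK, LinearMap.mem_range, eq_comm]
    rw [this]; exact hcl
  haveI : CompleteSpace K := hKcl.completeSpace_coe
  set g : E →L[ℂ] K := f.codRestrict K (fun v => LinearMap.mem_range_self _ v) with hg
  have hgker : LinearMap.ker (g : E →ₗ[ℂ] K) = ⊥ := by
    rw [ContinuousLinearMap.ker_codRestrict]
    exact LinearMap.ker_eq_bot.mpr hinj
  have hgrange : LinearMap.range (g : E →ₗ[ℂ] K) = ⊤ := by
    rw [LinearMap.range_eq_top]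
    rintro ⟨w, hw⟩
    obtain ⟨v, hv⟩ := hw
    exact ⟨v, Subtype.ext hv⟩
  set e := ContinuousLinearEquiv.ofBijective g hgker hgrange with he
  obtain ⟨C, hC⟩ : ∃ C : NNReal, AntilipschitzWith C ⇑e := ⟨_, e.antilipschitz⟩
  refine ⟨((C : ℝ) + 1)⁻¹, by positivity, fun v => ?_⟩
  have h1 : ‖v‖ ≤ (C : ℝ) * ‖f v‖ := by
    have h2 := hC.le_mul_dist v 0
    rw [dist_zero_right, map_zero, dist_zero_right] at h2
    have h3 : ‖e v‖ = ‖f v‖ := by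
      rw [he, ContinuousLinearEquiv.coeFn_ofBijective]
      rfl
    rwa [h3] at h2
  rw [inv_mul_le_iff₀ (by positivity)]
  nlinarith [norm_nonneg (f v), C.coe_nonneg, norm_nonneg v]




/-- Let `H` be a complex Hilbert space, `x, y` bounded operators on `H`
with `y ∘ x - x ∘ y = y` and `R(y)` closed.  For every `λ ∈ ℂ` the following are
equivalent: (a) `d₁(λ)` is injective, `ker d₀(λ) = ran d₁(λ)`, and `d₀(λ)` has closed
range; (b) the restriction of `x - 1 - λ` to `ker y` is a bijection of `ker y` onto
`ker y`, and the operator `x̄ - λ` induced on `H ⧸ R(y)` is bounded below.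
(Equivalently, `σ_{π,1}((y,x),H) = {0} × (Sp(x-1, ker y) ∪ Π(x̄, H ⧸ R(y)))`.) -/
theorem sigma_pi_one_characterization
    {H : Type*} [NormedAddCommGroup H] [InnerProductSpace ℂ H] [CompleteSpace H]
    (x y : H →L[ℂ] H) (hcomm : y ∘L x - x ∘L y = y)
    (hclosed : IsClosed ((LinearMap.range (y : H →ₗ[ℂ] H) : Submodule ℂ H) : Set H))
    (hran : ∀ v ∈ LinearMap.range (y : H →ₗ[ℂ] H), x v ∈ LinearMap.range (y : H →ₗ[ℂ] H)) :
    ∀ l : ℂ,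
      (Function.Injective ⇑((-(x - 1 - l • (1 : H →L[ℂ] H))).prod y) ∧
          LinearMap.ker ((y.coprod (x - l • (1 : H →L[ℂ] H)) : H × H →L[ℂ] H) : H × H →ₗ[ℂ] H) =
            LinearMap.range (((-(x - 1 - l • (1 : H →L[ℂ] H))).prod y : H →L[ℂ] H × H) : H →ₗ[ℂ] H × H) ∧
          IsClosed (Set.range ⇑(y.coprod (x - l • (1 : H →L[ℂ] H))))) ↔
        (Set.BijOn ⇑(x - 1 - l • (1 : H →L[ℂ] H))
            (LinearMap.ker (y : H →ₗ[ℂ] H) : Set H) (LinearMap.ker (y : H →ₗ[ℂ] H) : Set H) ∧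
          ∃ c : ℝ, 0 < c ∧ ∀ v : H ⧸ LinearMap.range (y : H →ₗ[ℂ] H),
            c * ‖v‖ ≤ ‖inducedOnQuotient (LinearMap.range (y : H →ₗ[ℂ] H)) x hran v - l • v‖) := by
  intro l
  set S : Submodule ℂ H := LinearMap.range (y : H →ₗ[ℂ] H) with hSdef
  set z : H →L[ℂ] H := x - 1 - l • (1 : H →L[ℂ] H) with hzdef
  set w : H →L[ℂ] H := x - l • (1 : H →L[ℂ] H) with hwdef
  have hyx : ∀ v, y (x v) = x (y v) + y v := by
    intro v
    have h := congrArg (fun t : H →L[ℂ] H => t v) hcomm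
    simp only [ContinuousLinearMap.sub_apply, ContinuousLinearMap.comp_apply,
      ContinuousLinearMap.coe_comp', Function.comp_apply] at h
    rw [sub_eq_iff_eq_add] at h
    rw [h, add_comm]
  have hyz : ∀ v, y (z v) = w (y v) := by
    intro v
    simp only [hzdef, hwdef, ContinuousLinearMap.sub_apply, ContinuousLinearMap.smul_apply,
      ContinuousLinearMap.one_apply, map_sub, map_smul]
    rw [hyx v]
    abel
  have hzS : ∀ v, y v = 0 → y (z v) = 0 := fun v hv => by rw [hyz, hv, map_zero]
  have hmemS : ∀ v, y v ∈ S := fun v => ⟨v, rfl⟩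
  set T : (H ⧸ S) →L[ℂ] (H ⧸ S) :=
    inducedOnQuotient S x hran - l • (1 : (H ⧸ S) →L[ℂ] (H ⧸ S)) with hTdef
  have hTv : ∀ v : H ⧸ S, T v = inducedOnQuotient S x hran v - l • v := by
    intro v
    simp [hTdef, ContinuousLinearMap.sub_apply, ContinuousLinearMap.smul_apply,
      ContinuousLinearMap.one_apply]
  have hTmk : ∀ b : H, T (Submodule.Quotient.mk b) = Submodule.Quotient.mk (w b) := by
    intro b
    have h1 : inducedOnQuotient S x hran (Submodule.Quotient.mk b)
        = Submodule.Quotient.mk (x b) := rfl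
    rw [hTv, h1]
    rw [show w b = x b - l • b from by
      simp [hwdef, ContinuousLinearMap.sub_apply, ContinuousLinearMap.smul_apply,
        ContinuousLinearMap.one_apply]]
    rw [← Submodule.Quotient.mk_smul, ← Submodule.Quotient.mk_sub]
  have hsep : ∀ q : H ⧸ S, ‖q‖ = 0 → q = 0 := by
    intro q hq
    obtain ⟨b, rfl⟩ := Submodule.Quotient.mk_surjective S q
    rw [Submodule.Quotient.mk_eq_zero]
    exact (QuotientAddGroup.norm_mk_eq_zero (S := S.toAddSubgroup) (m := b) (hS := hclosed)).mp hq
  have hrange_eq : Set.range ⇑(y.coprod w) = ⇑S.mkQ ⁻¹' (Set.range ⇑T) := by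
    ext v
    constructor
    · rintro ⟨⟨a, b⟩, rfl⟩
      refine ⟨Submodule.Quotient.mk b, ?_⟩
      rw [hTmk]
      simp only [ContinuousLinearMap.coprod_apply, Submodule.mkQ_apply]
      rw [Submodule.Quotient.eq]
      have h2 : w b - (y a + w b) = -(y a) := by abel
      rw [h2]
      exact S.neg_mem (hmemS a)
    · rintro ⟨q, hq⟩
      obtain ⟨b, rfl⟩ := Submodule.Quotient.mk_surjective S q
      rw [hTmk, Submodule.mkQ_apply, Submodule.Quotient.eq] at hq
      obtain ⟨a, ha⟩ := hq
      refine ⟨(-a, b), ?_⟩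
      simp only [ContinuousLinearMap.coprod_apply, map_neg]
      rw [ContinuousLinearMap.coe_coe] at ha; rw [ha]
      abel
  have hclosed_iff : IsClosed (Set.range ⇑(y.coprod w)) ↔ IsClosed (Set.range ⇑T) := by
    rw [hrange_eq]
    exact S.isOpenQuotientMap_mkQ.isQuotientMap.isClosed_preimage
  constructor
  · rintro ⟨hinj, hker, hcl⟩
    have hTinj : Function.Injective ⇑T := by
      have h0 : ∀ q, T q = 0 → q = 0 := by
        intro q hq
        obtain ⟨b, rfl⟩ := Submodule.Quotient.mk_surjective S q
        rw [hTmk, Submodule.Quotient.mk_eq_zero] at hq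
        obtain ⟨a, ha⟩ := S.neg_mem hq
        have hab : (a, b) ∈ LinearMap.ker ((y.coprod w : H × H →L[ℂ] H) : H × H →ₗ[ℂ] H) := by
          simp only [LinearMap.mem_ker, ContinuousLinearMap.coe_coe, ContinuousLinearMap.coprod_apply]
          rw [ContinuousLinearMap.coe_coe] at ha; rw [ha]
          abel
        rw [hker] at hab
        rw [LinearMap.mem_range] at hab
        obtain ⟨cc, hcc⟩ := hab
        simp only [ContinuousLinearMap.coe_coe, ContinuousLinearMap.prod_apply, ContinuousLinearMap.neg_apply,
          Prod.mk.injEq] at hcc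
        rw [Submodule.Quotient.mk_eq_zero]
        exact hcc.2 ▸ hmemS cc
      intro q1 q2 h12
      have h3 := h0 (q1 - q2) (by rw [map_sub, h12, sub_self])
      exact sub_eq_zero.mp h3
    have hTcl : IsClosed (Set.range ⇑T) := hclosed_iff.mp hcl
    refine ⟨⟨?_, ?_, ?_⟩, ?_⟩
    · intro v hv
      simp only [SetLike.mem_coe, LinearMap.mem_ker] at hv ⊢
      exact hzS v hv
    · intro u hu v hv huv
      simp only [SetLike.mem_coe, LinearMap.mem_ker, ContinuousLinearMap.coe_coe] at hu hv
      apply hinj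
      simp only [ContinuousLinearMap.prod_apply, ContinuousLinearMap.neg_apply, Prod.mk.injEq]
      exact ⟨by rw [huv], by rw [hu, hv]⟩
    · intro a ha
      simp only [SetLike.mem_coe, LinearMap.mem_ker] at ha
      have hmem : (a, (0 : H)) ∈ LinearMap.ker ((y.coprod w : H × H →L[ℂ] H) : H × H →ₗ[ℂ] H) := by
        simp [LinearMap.mem_ker, ContinuousLinearMap.coprod_apply, ha]
      rw [hker, LinearMap.mem_range] at hmem
      obtain ⟨cc, hcc⟩ := hmem
      simp only [ContinuousLinearMap.coe_coe, ContinuousLinearMap.prod_apply, ContinuousLinearMap.neg_apply,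
        Prod.mk.injEq] at hcc
      obtain ⟨h1, h2⟩ := hcc
      refine ⟨-cc, ?_, ?_⟩
      · simp only [SetLike.mem_coe, LinearMap.mem_ker, ContinuousLinearMap.coe_coe, map_neg, h2, neg_zero]
      · rw [map_neg, h1]
    · letI nG : NormedAddCommGroup (H ⧸ S) :=
        Submodule.Quotient.normedAddCommGroup (S := S) (hS := hclosed)
      letI nS : @NormedSpace ℂ (H ⧸ S) _ nG.toSeminormedAddCommGroup :=
        Submodule.Quotient.normedSpace (S := S) ℂ
      letI nC : @CompleteSpace (H ⧸ S) nG.toUniformSpace :=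
        Submodule.Quotient.completeSpace (S := S)
      obtain ⟨c, hc0, hc⟩ := @auxBddBelowOfInjClosedRange (H ⧸ S) nG nS nC T hTinj hTcl
      refine ⟨c, hc0, fun v => ?_⟩
      have h2 := hc v
      rw [hTv v] at h2
      exact h2
  · rintro ⟨hbij, c, hc0, hc⟩
    have hcT : ∀ v : H ⧸ S, c * ‖v‖ ≤ ‖T v‖ := by
      intro v
      rw [hTv]
      exact hc v
    have hbS : ∀ b : H, T (Submodule.Quotient.mk b) = 0 → b ∈ S := by
      intro b h0
      have h1 := hcT (Submodule.Quotient.mk b)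
      rw [h0, norm_zero] at h1
      have h2 : ‖(Submodule.Quotient.mk b : H ⧸ S)‖ = 0 :=
        le_antisymm (by nlinarith [norm_nonneg (Submodule.Quotient.mk b : H ⧸ S)])
          (norm_nonneg _)
      have h3 := hsep _ h2
      rwa [Submodule.Quotient.mk_eq_zero] at h3
    have hkey : ∀ a b : H, y a + w b = 0 → ∃ cc : H, -(z cc) = a ∧ y cc = b := by
      intro a b hab
      have hwbS : w b ∈ S := by
        rw [eq_neg_of_add_eq_zero_right hab, ← map_neg]
        exact hmemS (-a)
      have h0 : T (Submodule.Quotient.mk b) = 0 := by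
        rw [hTmk, Submodule.Quotient.mk_eq_zero]
        exact hwbS
      obtain ⟨c₀, hc₀⟩ := hbS b h0
      have hky : a + z c₀ ∈ (LinearMap.ker (y : H →ₗ[ℂ] H) : Set H) := by
        simp only [SetLike.mem_coe, LinearMap.mem_ker, ContinuousLinearMap.coe_coe, map_add]
        rw [ContinuousLinearMap.coe_coe] at hc₀; rw [hyz c₀, hc₀]
        exact hab
      obtain ⟨k, hk, hzk⟩ := hbij.surjOn hky
      simp only [SetLike.mem_coe, LinearMap.mem_ker, ContinuousLinearMap.coe_coe] at hk
      refine ⟨c₀ - k, ?_, ?_⟩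
      · rw [map_sub, hzk]
        abel
      · rw [ContinuousLinearMap.coe_coe] at hc₀; rw [map_sub, hc₀, hk, sub_zero]
    refine ⟨?_, ?_, ?_⟩
    · have h0 : ∀ u, -(z u) = 0 → y u = 0 → u = 0 := by
        intro u h1 h2
        have hu : u ∈ (LinearMap.ker (y : H →ₗ[ℂ] H) : Set H) := by
          simp only [SetLike.mem_coe, LinearMap.mem_ker]
          exact h2
        have h0' : (0 : H) ∈ (LinearMap.ker (y : H →ₗ[ℂ] H) : Set H) := by simp
        apply hbij.injOn hu h0'
        rw [map_zero]
        exact neg_eq_zero.mp h1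
      intro u v huv
      simp only [ContinuousLinearMap.coe_coe, ContinuousLinearMap.prod_apply, ContinuousLinearMap.neg_apply,
        Prod.mk.injEq] at huv
      obtain ⟨h1, h2⟩ := huv
      have h3 := h0 (u - v) (by rw [map_sub, neg_sub, sub_eq_zero]; exact (neg_injective h1).symm)
        (by rw [map_sub, h2, sub_self])
      exact sub_eq_zero.mp h3
    · apply le_antisymm
      · rintro ⟨a, b⟩ hab
        simp only [LinearMap.mem_ker, ContinuousLinearMap.coe_coe, ContinuousLinearMap.coprod_apply] at hab
        obtain ⟨cc, h1, h2⟩ := hkey a b hab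
        rw [LinearMap.mem_range]
        refine ⟨cc, ?_⟩
        simp only [ContinuousLinearMap.coe_coe, ContinuousLinearMap.prod_apply, ContinuousLinearMap.neg_apply,
          Prod.mk.injEq]
        exact ⟨h1, h2⟩
      · rintro ⟨a, b⟩ ⟨cc, hcc⟩
        simp only [ContinuousLinearMap.coe_coe, ContinuousLinearMap.prod_apply, ContinuousLinearMap.neg_apply,
          Prod.mk.injEq] at hcc
        obtain ⟨h1, h2⟩ := hcc
        simp only [LinearMap.mem_ker, ContinuousLinearMap.coe_coe, ContinuousLinearMap.coprod_apply]
        rw [← h1, ← h2, map_neg, hyz]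
        exact neg_add_cancel _
    · rw [hclosed_iff]
      exact auxIsClosedRangeOfBddBelow hsep T hc0 hcT
end

section
/- For every λ ∈ ℂ, the following are equivalent: (a) d₀(λ) is surjective and ker d₀(λ) = ran d₁(λ); (b) the induced operator x̄ − λ : H/R(y) → H/R(y) is bijective and the restriction of x−1−λ to ker(y) is surjective onto ker(y). (Equivalently, σ_{δ,1}((y,x),H) = {0} × (Sp(x̄, H/R(y)) ∪ ΠC(x−1, ker y)), where ΠC denotes the approximate compression spectrum.) -/
/-- Let `H` be a complex Hilbert space, `x, y` bounded operators on `H`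
with `y ∘ x - x ∘ y = y` and `R(y)` closed.  For every `λ ∈ ℂ` the following are
equivalent: (a) `d₀(λ)` is surjective and `ker d₀(λ) = ran d₁(λ)`; (b) the operator
`x̄ - λ` induced on `H ⧸ R(y)` is bijective and the restriction of `x - 1 - λ` to
`ker y` maps `ker y` onto `ker y`.
(Equivalently, `σ_{δ,1}((y,x),H) = {0} × (Sp(x̄, H ⧸ R(y)) ∪ ΠC(x-1, ker y))`.) -/
theorem sigma_delta_one_characterization
    {H : Type*} [NormedAddCommGroup H] [InnerProductSpace ℂ H] [CompleteSpace H]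
    (x y : H →L[ℂ] H) (hcomm : y ∘L x - x ∘L y = y)
    (hclosed : IsClosed ((LinearMap.range (y : H →ₗ[ℂ] H) : Submodule ℂ H) : Set H))
    (hran : ∀ v ∈ LinearMap.range (y : H →ₗ[ℂ] H), x v ∈ LinearMap.range (y : H →ₗ[ℂ] H)) :
    ∀ l : ℂ,
      (Function.Surjective ⇑(y.coprod (x - l • (1 : H →L[ℂ] H))) ∧
          LinearMap.ker (y.coprod (x - l • (1 : H →L[ℂ] H)) : H × H →ₗ[ℂ] H) =
            LinearMap.range ((-(x - 1 - l • (1 : H →L[ℂ] H))).prod y : H →ₗ[ℂ] H × H)) ↔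
        (Function.Bijective
            (fun v : H ⧸ LinearMap.range (y : H →ₗ[ℂ] H) =>
              inducedOnQuotient (LinearMap.range (y : H →ₗ[ℂ] H)) x hran v - l • v) ∧
          Set.SurjOn ⇑(x - 1 - l • (1 : H →L[ℂ] H))
            (LinearMap.ker (y : H →ₗ[ℂ] H) : Set H) (LinearMap.ker (y : H →ₗ[ℂ] H) : Set H)) := by
  intro l
  set R : Submodule ℂ H := LinearMap.range (y : H →ₗ[ℂ] H) with hRdef
  set A : H →L[ℂ] H := x - 1 - l • (1 : H →L[ℂ] H) with hA
  set B : H →L[ℂ] H := x - l • (1 : H →L[ℂ] H) with hB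
  have hAv : ∀ v, A v = x v - v - l • v := by intro v; simp [hA]
  have hBv : ∀ v, B v = x v - l • v := by intro v; simp [hB]
  have key : ∀ v, y (x v) = x (y v) + y v := by
    intro v
    have h := ContinuousLinearMap.ext_iff.1 hcomm v
    simp only [ContinuousLinearMap.sub_apply, ContinuousLinearMap.comp_apply] at h
    rw [sub_eq_iff_eq_add] at h
    rw [h, add_comm]
  have key2 : ∀ v, y (A v) = B (y v) := by
    intro v
    rw [hAv, hBv]
    simp only [map_sub, map_smul, key v]
    abel
  have hπsurj : Function.Surjective R.mkQ := R.mkQ_surjective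
  have hInd : ∀ b : H, inducedOnQuotient R x hran (R.mkQ b) = R.mkQ (x b) := by
    intro b
    show (Submodule.mapQ R R (x : H →ₗ[ℂ] H) fun v hv => hran v hv) (R.mkQ b) = R.mkQ (x b)
    simp [Submodule.mapQ_apply]
  set T : (H ⧸ R) →L[ℂ] (H ⧸ R) := inducedOnQuotient R x hran - l • 1 with hTdef
  have hTfun : (fun v : H ⧸ R => inducedOnQuotient R x hran v - l • v) = ⇑T := by
    funext v; simp [hTdef]
  have hT : ∀ b : H, T (R.mkQ b) = R.mkQ (B b) := by
    intro b
    simp only [hTdef, ContinuousLinearMap.sub_apply, ContinuousLinearMap.smul_apply,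
      ContinuousLinearMap.one_apply, hInd b, hBv, map_sub, map_smul]
  have hmk0 : ∀ v : H, R.mkQ v = 0 ↔ v ∈ R := by
    intro v; rw [Submodule.mkQ_apply]; exact Submodule.Quotient.mk_eq_zero R
  rw [hTfun]
  constructor
  · rintro ⟨hsurj, hker⟩
    refine ⟨⟨?_, ?_⟩, ?_⟩
    · rw [injective_iff_map_eq_zero]
      intro q hq
      obtain ⟨b, rfl⟩ := hπsurj q
      rw [hT] at hq
      obtain ⟨a, ha⟩ := (hmk0 _).1 hq
      simp only [ContinuousLinearMap.coe_coe] at ha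
      have hmem : ((-a, b) : H × H) ∈ LinearMap.ker (y.coprod B : H × H →ₗ[ℂ] H) := by
        simp only [LinearMap.mem_ker, ContinuousLinearMap.coe_coe, neg_smul, one_smul, ContinuousLinearMap.coprod_apply, map_neg, ha]
        abel
      rw [hker] at hmem
      obtain ⟨c, hc⟩ := hmem
      have hyc : y c = b := congrArg Prod.snd hc
      exact (hmk0 b).2 ⟨c, hyc⟩
    · intro q
      obtain ⟨c, rfl⟩ := hπsurj q
      obtain ⟨⟨a, b⟩, hab⟩ := hsurj c
      simp only [ContinuousLinearMap.coprod_apply] at hab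
      refine ⟨R.mkQ b, ?_⟩
      rw [hT]
      simp only [Submodule.mkQ_apply]
      rw [Submodule.Quotient.eq]
      refine ⟨-a, ?_⟩
      rw [map_neg]
      rw [← hab]
      abel
    · intro k hk
      have hk' : y k = 0 := hk
      have hmem : ((-k, (0 : H)) : H × H) ∈ LinearMap.ker (y.coprod B : H × H →ₗ[ℂ] H) := by
        simp only [LinearMap.mem_ker, ContinuousLinearMap.coe_coe, neg_smul, one_smul, ContinuousLinearMap.coprod_apply, map_neg, hk',
          map_zero, neg_zero, add_zero]
      rw [hker] at hmem
      obtain ⟨c, hc⟩ := hmem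
      have h1 : -(A c) = -k := congrArg Prod.fst hc
      have h2 : y c = 0 := congrArg Prod.snd hc
      exact ⟨c, h2, neg_injective h1⟩
  · rintro ⟨hbij, hson⟩
    constructor
    · intro c
      obtain ⟨q, hq⟩ := hbij.2 (R.mkQ c)
      obtain ⟨b, rfl⟩ := hπsurj q
      rw [hT] at hq
      simp only [Submodule.mkQ_apply] at hq
      obtain ⟨a, ha⟩ := (Submodule.Quotient.eq R).1 hq
      simp only [ContinuousLinearMap.coe_coe] at ha
      refine ⟨(-a, b), ?_⟩
      simp only [ContinuousLinearMap.coe_coe, neg_smul, one_smul, ContinuousLinearMap.coprod_apply, map_neg, ha]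
      abel
    · apply le_antisymm
      · rintro ⟨a, b⟩ hp
        simp only [SetLike.mem_coe, LinearMap.mem_ker, ContinuousLinearMap.coe_coe, ContinuousLinearMap.coprod_apply] at hp
        have hbR : b ∈ R := by
          have hBbR : B b ∈ R := ⟨-a, by rw [map_neg, neg_eq_iff_add_eq_zero]; exact hp⟩
          have h0 : T (R.mkQ b) = T (R.mkQ 0) := by
            rw [hT, hT, map_zero, (hmk0 _).2 hBbR]
            simp
          have := hbij.1 h0
          rw [map_zero] at this
          exact (hmk0 b).1 this
        obtain ⟨c, hc⟩ := hbR
        simp only [ContinuousLinearMap.coe_coe] at hc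
        have hkmem : a + A c ∈ (LinearMap.ker (y : H →ₗ[ℂ] H) : Set H) := by
          show y (a + A c) = 0
          rw [map_add, key2, hc, hp]
        obtain ⟨k', hk'ker, hk'⟩ := hson hkmem
        have hyk' : y k' = 0 := hk'ker
        refine ⟨c - k', Prod.ext ?_ ?_⟩
        · show -(A (c - k')) = a
          rw [map_sub, hk']
          abel
        · show y (c - k') = b
          rw [map_sub, hyk', hc, sub_zero]
      · rintro p ⟨c, rfl⟩
        simp only [SetLike.mem_coe, LinearMap.mem_ker, ContinuousLinearMap.coe_coe, neg_smul, one_smul, ContinuousLinearMap.coprod_apply,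
          ContinuousLinearMap.prod_apply, ContinuousLinearMap.neg_apply, map_neg, key2]
        abel
end

section
/- With x₁₁ the restriction of x to the closed invariant subspace R(y) and x₃₃ = P_{ker(y)^⊥} ∘ x restricted to ker(y)^⊥ (the compression of x to ker(y)^⊥), the intertwining relation ȳ ∘ x₃₃ − x₁₁ ∘ ȳ = ȳ holds, where ȳ : ker(y)^⊥ → R(y) is the (invertible) restriction of y; consequently x₃₃ = I + ȳ⁻¹ ∘ x₁₁ ∘ ȳ and σ(x₃₃) = σ(x₁₁) + 1. -/
/-- The compression of an operator to a subspace admitting an orthogonal projection. -/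
noncomputable def compressOp {H : Type*} [NormedAddCommGroup H] [InnerProductSpace ℂ H]
    (K : Submodule ℂ H) [Submodule.HasOrthogonalProjection K] (x : H →L[ℂ] H) : K →L[ℂ] K :=
  (Submodule.orthogonalProjectionOnto K).comp (x.comp K.subtypeL)

/-- Conjugation by a continuous linear equivalence, as an algebra equivalence of
endomorphism algebras. -/
noncomputable def conjAlgEquiv {E F : Type*} [NormedAddCommGroup E] [NormedSpace ℂ E]
    [NormedAddCommGroup F] [NormedSpace ℂ F] (e : E ≃L[ℂ] F) :
    (E →L[ℂ] E) ≃ₐ[ℂ] (F →L[ℂ] F) where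
  toFun a := (e : E →L[ℂ] F) ∘L a ∘L (e.symm : F →L[ℂ] E)
  invFun b := (e.symm : F →L[ℂ] E) ∘L b ∘L (e : E →L[ℂ] F)
  left_inv a := by ext v; simp
  right_inv b := by ext v; simp
  map_mul' a b := by ext v; simp [ContinuousLinearMap.mul_apply]
  map_add' a b := by ext v; simp
  commutes' r := by ext v; simp [Algebra.algebraMap_eq_smul_one]

/-- Let `H` be a complex Hilbert space, `x, y` bounded operators on `H`
with `y ∘ x - x ∘ y = y`, `R(y)` closed and `y² = 0`.  Let `x₁₁` be the restriction of
`x` to the invariant subspace `R(y)` and `x₃₃` the compression of `x` to `(ker y)ᗮ`.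
Then the intertwining relation `ȳ ∘ x₃₃ - x₁₁ ∘ ȳ = ȳ` holds, where
`ȳ : (ker y)ᗮ → R(y)` is the (invertible) restriction of `y`; consequently
`x₃₃ = I + ȳ⁻¹ ∘ x₁₁ ∘ ȳ` and `σ(x₃₃) = σ(x₁₁) + 1`. -/
theorem intertwining_and_spectrum_shift
    {H : Type*} [NormedAddCommGroup H] [InnerProductSpace ℂ H] [CompleteSpace H]
    (x y : H →L[ℂ] H) (hcomm : y ∘L x - x ∘L y = y)
    (hclosed : IsClosed ((LinearMap.range (y : H →ₗ[ℂ] H) : Submodule ℂ H) : Set H))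
    (hy2 : y ∘L y = 0)
    (hran : ∀ v ∈ LinearMap.range (y : H →ₗ[ℂ] H), x v ∈ LinearMap.range (y : H →ₗ[ℂ] H))
    [Submodule.HasOrthogonalProjection (LinearMap.ker (y : H →ₗ[ℂ] H))ᗮ] :
    (∀ v : (LinearMap.ker (y : H →ₗ[ℂ] H))ᗮ,
        y ↑(compressOp (LinearMap.ker (y : H →ₗ[ℂ] H))ᗮ x v) -
            ↑(restrictOp (LinearMap.range (y : H →ₗ[ℂ] H)) x hran
              ⟨y ↑v, LinearMap.mem_range_self (y : H →ₗ[ℂ] H) (v : H)⟩) =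
          y ↑v) ∧
    (∃ e : (LinearMap.ker (y : H →ₗ[ℂ] H))ᗮ ≃L[ℂ] LinearMap.range (y : H →ₗ[ℂ] H),
        (∀ v : (LinearMap.ker (y : H →ₗ[ℂ] H))ᗮ, (e v : H) = y ↑v) ∧
        ∀ v : (LinearMap.ker (y : H →ₗ[ℂ] H))ᗮ,
          compressOp (LinearMap.ker (y : H →ₗ[ℂ] H))ᗮ x v =
            v + e.symm (restrictOp (LinearMap.range (y : H →ₗ[ℂ] H)) x hran (e v))) ∧
    spectrum ℂ (compressOp (LinearMap.ker (y : H →ₗ[ℂ] H))ᗮ x) =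
      (fun z : ℂ => z + 1) '' spectrum ℂ (restrictOp (LinearMap.range (y : H →ₗ[ℂ] H)) x hran) := by
  set K := (LinearMap.ker (y : H →ₗ[ℂ] H))ᗮ with hK
  set R := (LinearMap.range (y : H →ₗ[ℂ] H)) with hR
  haveI : CompleteSpace R := hclosed.completeSpace_coe
  set x₁₁ := restrictOp R x hran with hx11
  set x₃₃ := compressOp K x with hx33
  -- Pointwise intertwining
  have key : ∀ v : K, y ↑(x₃₃ v) - x (y ↑v) = y ↑v := by
    intro v
    have h1 : (x v : H) - ↑(Submodule.orthogonalProjectionOnto K (x v)) ∈ Kᗮ :=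
      Submodule.sub_starProjection_mem_orthogonal _
    have h2 : Kᗮ = LinearMap.ker (y : H →ₗ[ℂ] H) := Submodule.orthogonal_orthogonal _
    have h3 : y ((x v : H) - ↑(Submodule.orthogonalProjectionOnto K (x v))) = 0 := by
      rw [h2] at h1; exact h1
    have h4 : y ↑(x₃₃ v) = y (x ↑v) := by
      have : (x₃₃ v : H) = ↑(Submodule.orthogonalProjectionOnto K (x ↑v)) := rfl
      rw [this]
      rw [map_sub, sub_eq_zero] at h3
      exact h3.symm
    have h5 : y (x ↑v) - x (y ↑v) = y ↑v := by
      have := congrArg (fun f : H →L[ℂ] H => f (v : H)) hcomm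
      simpa using this
    rw [h4]; exact h5
  have part1 : ∀ v : K,
      y ↑(x₃₃ v) - ↑(x₁₁ ⟨y ↑v, LinearMap.mem_range_self (y : H →ₗ[ℂ] H) (v : H)⟩) = y ↑v := by
    intro v
    have : (↑(x₁₁ ⟨y ↑v, LinearMap.mem_range_self (y : H →ₗ[ℂ] H) (v : H)⟩) : H) = x (y ↑v) := rfl
    rw [this]; exact key v
  -- the restriction ȳ : K →L R and its bijectivity
  set f : K →L[ℂ] R := (y.comp K.subtypeL).codRestrict R
    (fun v => LinearMap.mem_range_self (y : H →ₗ[ℂ] H) (v : H)) with hf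
  have hfinj : LinearMap.ker (f : K →ₗ[ℂ] R) = ⊥ := by
    rw [LinearMap.ker_eq_bot']
    intro v hv
    have hv' : y (v : H) = 0 := congrArg Subtype.val hv
    have hself : (inner (𝕜 := ℂ) (v : H) (v : H)) = 0 :=
      (Submodule.mem_orthogonal (LinearMap.ker (y : H →ₗ[ℂ] H)) (v : H)).mp v.2 (v : H) hv'
    exact Subtype.ext (inner_self_eq_zero.mp hself)
  have hfsurj : LinearMap.range (f : K →ₗ[ℂ] R) = ⊤ := by
    rw [LinearMap.range_eq_top]
    rintro ⟨w, u, rfl⟩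
    haveI : Submodule.HasOrthogonalProjection (LinearMap.ker (y : H →ₗ[ℂ] H)) := inferInstance
    obtain ⟨a, ha, b, hb, hab⟩ := Submodule.exists_add_mem_mem_orthogonal (K := LinearMap.ker (y : H →ₗ[ℂ] H)) u
    refine ⟨⟨b, hb⟩, ?_⟩
    apply Subtype.ext
    show y b = y u
    rw [hab, map_add, (show y a = 0 from ha), zero_add]
  set e : K ≃L[ℂ] R := ContinuousLinearEquiv.ofBijective f hfinj hfsurj with he
  have heapp : ∀ v : K, (e v : H) = y ↑v := fun v => rfl
  -- Part 2 pointwise formula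
  have part2 : ∀ v : K, x₃₃ v = v + e.symm (x₁₁ (e v)) := by
    intro v
    have h1 : e (x₃₃ v) = x₁₁ (e v) + e v := by
      apply Subtype.ext
      have := part1 v
      have hev : e v = (⟨y ↑v, LinearMap.mem_range_self (y : H →ₗ[ℂ] H) (v : H)⟩ : R) := rfl
      show y ↑(x₃₃ v) = ↑(x₁₁ (e v)) + y ↑v
      rw [hev]
      exact (sub_eq_iff_eq_add.mp this).trans (add_comm _ _)
    have := congrArg e.symm h1
    rw [e.symm_apply_apply] at this
    rw [this, map_add, e.symm_apply_apply, add_comm]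
  refine ⟨part1, ⟨e, heapp, part2⟩, ?_⟩
  -- spectrum
  have hop : x₃₃ = 1 + ((e.symm : R →L[ℂ] K) ∘L x₁₁ ∘L (e : K →L[ℂ] R)) := by
    ext v
    simp only [ContinuousLinearMap.add_apply, ContinuousLinearMap.one_apply,
      ContinuousLinearMap.comp_apply, ContinuousLinearEquiv.coe_coe]
    exact congrArg Subtype.val (part2 v)
  have hconj : spectrum ℂ ((e.symm : R →L[ℂ] K) ∘L x₁₁ ∘L (e : K →L[ℂ] R)) =
      spectrum ℂ x₁₁ := by
    have h := AlgEquiv.spectrum_eq (conjAlgEquiv e)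
      ((e.symm : R →L[ℂ] K) ∘L x₁₁ ∘L (e : K →L[ℂ] R))
    have h2 : (conjAlgEquiv e) ((e.symm : R →L[ℂ] K) ∘L x₁₁ ∘L (e : K →L[ℂ] R)) = x₁₁ := by
      show (e : K →L[ℂ] R) ∘L ((e.symm : R →L[ℂ] K) ∘L x₁₁ ∘L (e : K →L[ℂ] R)) ∘L
        (e.symm : R →L[ℂ] K) = x₁₁
      ext w; simp
    rw [h2] at h
    exact h.symm
  rw [hop]
  have hone : (1 : K →L[ℂ] K) = algebraMap ℂ (K →L[ℂ] K) 1 := by simp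
  rw [hone, ← spectrum.singleton_add_eq, hconj]
  ext z
  simp only [Set.mem_add, Set.mem_singleton_iff, Set.mem_image]
  constructor
  · rintro ⟨a, rfl, b, hb, rfl⟩; exact ⟨b, hb, by ring⟩
  · rintro ⟨b, hb, rfl⟩; exact ⟨1, rfl, b, hb, by ring⟩
end

section
/- Assume H is finite dimensional, y² = 0, and let k = dim ker(y) and r = dim R(y) (so R(y) ⊆ ker(y)). Suppose e₁, …, e_k is a basis of ker(y) whose first r vectors e₁, …, e_r form a basis of R(y) and in which the matrix of the restriction of x to ker(y) is upper triangular with diagonal entries λ₁, …, λ_k. Then the set of λ ∈ ℂ for which the complex (C, d(λ)) fails to be exact equals {λ_i − 1 : 1 ≤ i ≤ k} ∪ {λ_i : r < i ≤ k} ∪ {λ_i + 1 : 1 ≤ i ≤ r}. (Equivalently, Sp((y,x),H) = {0} × ({λ_i − 1}_{1≤i≤k} ∪ {λ_i}_{r<i≤k} ∪ {λ_i + 1}_{1≤i≤r}).) -/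
open Module Submodule LinearMap

lemma tri_det {V : Type*} [AddCommGroup V] [Module ℂ V] {ι : Type*} [Fintype ι] [LinearOrder ι]
    [DecidableEq ι]
    (b : Basis ι ℂ V) (T : V →ₗ[ℂ] V) (d : ι → ℂ)
    (h : ∀ i, T (b i) - d i • b i ∈ Submodule.span ℂ (b '' {j | j < i})) :
    LinearMap.det T = ∏ i, d i := by
  rw [← LinearMap.det_toMatrix b]
  have key : ∀ i j : ι, ¬ (i < j) → (b.repr (T (b j) - d j • b j)) i = 0 := by
    intro i j hij
    have h2 := (Basis.mem_span_image b).1 (h j)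
    by_contra hne
    exact hij (h2 (Finsupp.mem_support_iff.2 hne))
  have hdiag : ∀ i, LinearMap.toMatrix b b T i i = d i := by
    intro i
    have := key i i (lt_irrefl i)
    simp only [map_sub, map_smul, Finsupp.sub_apply, Finsupp.smul_apply, Basis.repr_self,
      Finsupp.single_eq_same, smul_eq_mul, mul_one, sub_eq_zero] at this
    rw [LinearMap.toMatrix_apply, this]
  have hupper : (LinearMap.toMatrix b b T).BlockTriangular _root_.id := by
    intro i j hij
    have := key i j (not_lt.2 hij.le)
    simp only [map_sub, map_smul, Finsupp.sub_apply, Finsupp.smul_apply, Basis.repr_self,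
      Finsupp.single_apply, smul_eq_mul] at this
    rw [if_neg (show j ≠ i from ne_of_lt hij), mul_zero, sub_zero] at this
    rw [LinearMap.toMatrix_apply, this]
  rw [Matrix.det_of_upperTriangular hupper]
  exact Finset.prod_congr rfl fun i _ => hdiag i

lemma tri_det_shift {V : Type*} [AddCommGroup V] [Module ℂ V] {ι : Type*} [Fintype ι]
    [LinearOrder ι] [DecidableEq ι]
    (b : Basis ι ℂ V) (T : V →ₗ[ℂ] V) (d : ι → ℂ)
    (h : ∀ i, T (b i) - d i • b i ∈ Submodule.span ℂ (b '' {j | j < i})) (μ : ℂ) :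
    LinearMap.det (T - μ • (1 : V →ₗ[ℂ] V)) = ∏ i, (d i - μ) := by
  apply tri_det b _ (fun i => d i - μ)
  intro i
  have : (T - μ • (1 : V →ₗ[ℂ] V)) (b i) - (d i - μ) • b i = T (b i) - d i • b i := by
    simp only [LinearMap.sub_apply, LinearMap.smul_apply, Module.End.one_apply, sub_smul]
    abel
  rw [this]; exact h i

lemma det_ne_zero_iff_injective {V : Type*} [AddCommGroup V] [Module ℂ V]
    [FiniteDimensional ℂ V] (T : V →ₗ[ℂ] V) :
    LinearMap.det T ≠ 0 ↔ Function.Injective T := by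
  constructor
  · intro hd
    exact (LinearMap.equivOfDetNeZero T hd).injective
  · intro hi
    by_contra hd
    have := LinearMap.bot_lt_ker_of_det_eq_zero hd
    rw [LinearMap.ker_eq_bot.2 hi] at this
    exact lt_irrefl _ this

lemma det_ne_zero_iff_surjective {V : Type*} [AddCommGroup V] [Module ℂ V]
    [FiniteDimensional ℂ V] (T : V →ₗ[ℂ] V) :
    LinearMap.det T ≠ 0 ↔ Function.Surjective T := by
  rw [det_ne_zero_iff_injective, LinearMap.injective_iff_surjective]

lemma apply_mem_span {R M N : Type*} [CommRing R] [AddCommGroup M] [AddCommGroup N]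
    [Module R M] [Module R N] (g : M →ₗ[R] N) {S : Set M} {T : Set N}
    (hST : ∀ v ∈ S, g v ∈ Submodule.span R T) :
    ∀ v ∈ Submodule.span R S, g v ∈ Submodule.span R T := by
  intro v hv
  have hsub : S ⊆ ((Submodule.span R T).comap g : Set M) := hST
  exact Submodule.span_le.2 hsub hv

lemma subtype_mem_span_image_iff {R M : Type*} [CommRing R] [AddCommGroup M] [Module R M]
    {p : Submodule R M} {S : Set p} {v : p} :
    v ∈ Submodule.span R S ↔ (v : M) ∈ Submodule.span R ((p.subtype) '' S) := by
  constructor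
  · intro h
    have := Submodule.mem_map_of_mem (f := p.subtype) h
    rwa [Submodule.map_span] at this
  · intro h
    rw [← Submodule.map_span] at h
    obtain ⟨w, hw, hwv⟩ := h
    rwa [show w = v from Subtype.ext hwv] at hw

lemma middle_of_inj_surj {V W U : Type*} [AddCommGroup V] [Module ℂ V] [AddCommGroup W]
    [Module ℂ W] [AddCommGroup U] [Module ℂ U] [FiniteDimensional ℂ V]
    [FiniteDimensional ℂ W] [FiniteDimensional ℂ U]
    (d1 : V →ₗ[ℂ] W) (d0 : W →ₗ[ℂ] U) (hc : d0 ∘ₗ d1 = 0)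
    (h1 : Function.Injective d1) (h0 : Function.Surjective d0)
    (hdim : Module.finrank ℂ V + Module.finrank ℂ U = Module.finrank ℂ W) :
    LinearMap.ker d0 = LinearMap.range d1 := by
  have hle : LinearMap.range d1 ≤ LinearMap.ker d0 := LinearMap.range_le_ker_iff.2 hc
  have e1 : finrank ℂ (LinearMap.range d1) = finrank ℂ V := LinearMap.finrank_range_of_inj h1
  have e2 : finrank ℂ (LinearMap.range d0) + finrank ℂ (LinearMap.ker d0) = finrank ℂ W :=
    LinearMap.finrank_range_add_finrank_ker d0
  have e3 : LinearMap.range d0 = ⊤ := LinearMap.range_eq_top.2 h0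
  have e4 : finrank ℂ (LinearMap.range d0) = finrank ℂ U := by
    rw [e3]; exact finrank_top ℂ U
  exact (Submodule.eq_of_le_of_finrank_le hle (by omega)).symm

/-- Let `H` be a finite-dimensional complex inner product space and let
`x, y` be linear operators on `H` with `y ∘ x - x ∘ y = y` and `y² = 0`.  Set
`k = dim ker y` and `r = dim R(y)`.  Suppose `e₁, …, e_k` is a basis of `ker y` whose first
`r` vectors form a basis of `R(y)`, in which the restriction of `x` to `ker y` is upper
triangular with diagonal entries `λ₁, …, λ_k`.  Then the set of `λ ∈ ℂ` at which the
complex `0 → H →d₁(λ) H ⊕ H →d₀(λ) H → 0` fails to be exact equals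
`{λᵢ - 1 : 1 ≤ i ≤ k} ∪ {λᵢ : r < i ≤ k} ∪ {λᵢ + 1 : 1 ≤ i ≤ r}`. -/
theorem joint_spectrum_finite_dimensional
    {H : Type*} [NormedAddCommGroup H] [InnerProductSpace ℂ H] [FiniteDimensional ℂ H]
    (x y : H →ₗ[ℂ] H) (hcomm : y ∘ₗ x - x ∘ₗ y = y) (hy2 : y ∘ₗ y = 0)
    (k r : ℕ)
    (hk : k = Module.finrank ℂ (LinearMap.ker y))
    (hr : r = Module.finrank ℂ (LinearMap.range y))
    (e : Fin k → H)
    (he_ker : ∀ i, e i ∈ LinearMap.ker y)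
    (he_indep : LinearIndependent ℂ e)
    (he_span : Submodule.span ℂ (Set.range e) = LinearMap.ker y)
    (he_mem_range : ∀ i : Fin k, (i : ℕ) < r → e i ∈ LinearMap.range y)
    (he_span_range :
      Submodule.span ℂ (e '' {i : Fin k | (i : ℕ) < r}) = LinearMap.range y)
    (lam : Fin k → ℂ)
    (htriangular : ∀ i : Fin k,
      x (e i) - lam i • e i ∈ Submodule.span ℂ (e '' {j : Fin k | j < i})) :
    {l : ℂ |
        ¬ (Function.Injective ⇑((-(x - 1 - l • (1 : H →ₗ[ℂ] H))).prod y) ∧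
          LinearMap.ker (y.coprod (x - l • (1 : H →ₗ[ℂ] H))) =
            LinearMap.range ((-(x - 1 - l • (1 : H →ₗ[ℂ] H))).prod y) ∧
          Function.Surjective ⇑(y.coprod (x - l • (1 : H →ₗ[ℂ] H))))} =
      (Set.range fun i : Fin k => lam i - 1) ∪
      {z : ℂ | ∃ i : Fin k, r ≤ (i : ℕ) ∧ z = lam i} ∪
      {z : ℂ | ∃ i : Fin k, (i : ℕ) < r ∧ z = lam i + 1} := by
  classical
  -- basic consequences of the commutation relations
  have hyx : ∀ v, y (x v) = x (y v) + y v := by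
    intro v
    have h := LinearMap.ext_iff.1 hcomm v
    simp only [LinearMap.sub_apply, LinearMap.comp_apply] at h
    rw [sub_eq_iff_eq_add] at h
    rw [h]; abel
  have hy0 : ∀ v, y (y v) = 0 := by
    intro v
    have h := LinearMap.ext_iff.1 hy2 v
    simpa using h
  have hRleK : LinearMap.range y ≤ LinearMap.ker y := by
    rintro w ⟨v, rfl⟩
    exact hy0 v
  have hxK : ∀ v ∈ LinearMap.ker y, x v ∈ LinearMap.ker y := by
    intro v hv
    have hv' : y v = 0 := hv
    show y (x v) = 0
    rw [hyx, hv', map_zero, add_zero]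
  have hxRcomap : LinearMap.range y ≤ (LinearMap.range y).comap x := by
    rintro w ⟨v, rfl⟩
    refine ⟨x v - v, ?_⟩
    rw [map_sub, hyx]; abel
  have hrk : r ≤ k := by
    rw [hk, hr]; exact Submodule.finrank_mono hRleK
  have hdimH : Module.finrank ℂ H = k + r := by
    rw [hk, hr, add_comm]
    exact (LinearMap.finrank_range_add_finrank_ker y).symm
  -- the basis of ker y and the restriction of x
  set K := LinearMap.ker y with hK
  let eK : Fin k → K := fun i => ⟨e i, he_ker i⟩
  have heK_indep : LinearIndependent ℂ eK := by
    apply (LinearIndependent.of_comp K.subtype)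
    exact he_indep
  have him : K.subtype '' Set.range eK = Set.range e := by
    rw [← Set.range_comp]; rfl
  have heK_span : ⊤ ≤ Submodule.span ℂ (Set.range eK) := by
    rintro v -
    rw [subtype_mem_span_image_iff (p := K), him, he_span]
    exact v.2
  let bK : Basis (Fin k) ℂ K := Basis.mk heK_indep heK_span
  have hbK : ∀ i, (bK i : H) = e i := by
    intro i
    rw [show bK i = eK i from by rw [Basis.mk_apply]]
  let A : K →ₗ[ℂ] K := x.restrict hxK
  have hAtri : ∀ i, A (bK i) - lam i • bK i ∈ Submodule.span ℂ (⇑bK '' {j | j < i}) := by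
    intro i
    rw [subtype_mem_span_image_iff (p := K)]
    have him2 : K.subtype '' (⇑bK '' {j | j < i}) = e '' {j | j < i} := by
      rw [← Set.image_comp]
      apply Set.image_congr
      intro j _
      exact hbK j
    rw [him2]
    have hval : ((A (bK i) - lam i • bK i : K) : H) = x (e i) - lam i • e i := by
      have h1 : (A (bK i) : H) = x (e i) := by
        show (x.restrict hxK (bK i) : H) = x (e i)
        rw [LinearMap.restrict_apply]
        exact congrArg x (hbK i)
      push_cast [h1, hbK i]
      rfl
    rw [hval]
    exact htriangular i
  -- injectivity characterization
  have hinj_iff : ∀ l : ℂ,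
      Function.Injective ⇑((-(x - 1 - l • (1 : H →ₗ[ℂ] H))).prod y) ↔ ∀ i, lam i ≠ l + 1 := by
    intro l
    have step1 : Function.Injective ⇑((-(x - 1 - l • (1 : H →ₗ[ℂ] H))).prod y) ↔
        Function.Injective ⇑(A - (l + 1) • (1 : K →ₗ[ℂ] K)) := by
      rw [← LinearMap.ker_eq_bot, ← LinearMap.ker_eq_bot,
        LinearMap.ker_eq_bot', LinearMap.ker_eq_bot']
      have hprod : ∀ c : H, ((-(x - 1 - l • (1 : H →ₗ[ℂ] H))).prod y) c = 0 ↔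
          (x c - (l + 1) • c = 0 ∧ y c = 0) := by
        intro c
        rw [LinearMap.prod_apply, Function.prod, Prod.mk_eq_zero]
        have : (-(x - 1 - l • (1 : H →ₗ[ℂ] H))) c = -(x c - (l + 1) • c) := by
          simp only [LinearMap.neg_apply, LinearMap.sub_apply, LinearMap.smul_apply,
            Module.End.one_apply, add_smul, one_smul]
          congr 1
          abel
        rw [this, neg_eq_zero]
      have hsub : ∀ v : K, (A - (l + 1) • (1 : K →ₗ[ℂ] K)) v = 0 ↔
          x (v : H) - (l + 1) • (v : H) = 0 := by
        intro v
        rw [← Submodule.coe_eq_zero]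
        have : (((A - (l + 1) • (1 : K →ₗ[ℂ] K)) v : K) : H) = x (v : H) - (l + 1) • (v : H) := by
          simp [A, LinearMap.restrict_coe_apply]
        rw [this]
      constructor
      · intro hp v hv
        rw [hsub] at hv
        have : ((-(x - 1 - l • (1 : H →ₗ[ℂ] H))).prod y) (v : H) = 0 :=
          (hprod _).2 ⟨hv, v.2⟩
        have := hp _ this
        exact Subtype.ext this
      · intro hq c hc
        obtain ⟨h1, h2⟩ := (hprod c).1 hc
        have : (⟨c, h2⟩ : K) = 0 := hq ⟨c, h2⟩ ((hsub ⟨c, h2⟩).2 h1)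
        exact congrArg Subtype.val this
    rw [step1, ← det_ne_zero_iff_injective, tri_det_shift bK A lam hAtri (l + 1),
      Finset.prod_ne_zero_iff]
    constructor
    · intro h i
      have := h i (Finset.mem_univ i)
      exact fun he => this (by rw [he]; ring)
    · intro h i _
      exact sub_ne_zero.2 (h i)
  -- the quotient by range y
  set R := LinearMap.range y with hRdef
  let Q := H ⧸ R
  let π : H →ₗ[ℂ] Q := R.mkQ
  let xQ : Q →ₗ[ℂ] Q := Submodule.mapQ R R x hxRcomap
  have hπx : ∀ v, xQ (π v) = π (x v) := fun v => by
    show (R.mapQ R x hxRcomap) (R.mkQ v) = R.mkQ (x v)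
    simp only [Submodule.mkQ_apply, Submodule.mapQ_apply]
  have hπsurj : Function.Surjective π := Submodule.mkQ_surjective R
  have hπe0 : ∀ i : Fin k, (i : ℕ) < r → π (e i) = 0 := fun i hi =>
    (Submodule.Quotient.mk_eq_zero _).2 (he_mem_range i hi)
  -- index data
  have hei : ∀ i : Fin (k - r), r + (i : ℕ) < k := fun i => by
    have := i.2; omega
  let ei : Fin (k - r) → Fin k := fun i => ⟨r + i, hei i⟩
  let fe : Fin r → Fin k := fun j => ⟨j, lt_of_lt_of_le j.2 hrk⟩
  let f : Fin r → H := fun j => (he_mem_range (fe j) j.2).choose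
  have hyf : ∀ j, y (f j) = e (fe j) := fun j => (he_mem_range (fe j) j.2).choose_spec
  let ι := Lex (Fin (k - r) ⊕ Fin r)
  let gQ : ι → Q := fun i => Sum.elim (fun a => π (e (ei a))) (fun b => π (f b)) (ofLex i)
  have hgQ_inl : ∀ a, gQ (toLex (Sum.inl a)) = π (e (ei a)) := fun a => rfl
  have hgQ_inr : ∀ b, gQ (toLex (Sum.inr b)) = π (f b) := fun b => rfl
  have hπe : ∀ i : Fin k, π (e i) ∈ Submodule.span ℂ (Set.range gQ) := by
    intro i
    by_cases hi : (i : ℕ) < r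
    · rw [hπe0 i hi]; exact zero_mem _
    · have h1 : i = ei ⟨(i : ℕ) - r, by have := i.2; omega⟩ := by
        apply Fin.ext; show (i : ℕ) = r + ((i : ℕ) - r); omega
      rw [h1]
      exact Submodule.subset_span ⟨toLex (Sum.inl _), rfl⟩
  have hgQ_span : ⊤ ≤ Submodule.span ℂ (Set.range gQ) := by
    rintro q -
    obtain ⟨v, rfl⟩ := hπsurj q
    have h1 : y v ∈ Submodule.span ℂ (e '' {i : Fin k | (i : ℕ) < r}) := by
      rw [he_span_range]; exact ⟨v, rfl⟩
    have h2 : e '' {i : Fin k | (i : ℕ) < r} ⊆ ⇑y '' (Set.range f) := by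
      rintro w ⟨i, hi, rfl⟩
      refine ⟨f ⟨(i : ℕ), hi⟩, ⟨⟨(i : ℕ), hi⟩, rfl⟩, ?_⟩
      rw [hyf]
    have h3 : y v ∈ Submodule.map y (Submodule.span ℂ (Set.range f)) := by
      rw [Submodule.map_span]
      exact Submodule.span_mono h2 h1
    obtain ⟨u, hu, huv⟩ := h3
    have hvu : v - u ∈ Submodule.span ℂ (Set.range e) := by
      rw [he_span]
      show y (v - u) = 0
      rw [map_sub, huv, sub_self]
    have hsplit : π v = π (v - u) + π u := by
      rw [← map_add]; congr 1; abel
    rw [hsplit]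
    refine add_mem ?_ ?_
    · refine apply_mem_span π ?_ _ hvu
      rintro w ⟨i, rfl⟩
      exact hπe i
    · refine apply_mem_span π ?_ _ hu
      rintro w ⟨j, rfl⟩
      exact Submodule.subset_span ⟨toLex (Sum.inr j), rfl⟩
  have hcardι : Fintype.card ι = Module.finrank ℂ Q := by
    have hQr : Module.finrank ℂ Q + Module.finrank ℂ R = Module.finrank ℂ H :=
      Submodule.finrank_quotient_add_finrank R
    have : Fintype.card ι = (k - r) + r := by
      simp [ι, Fintype.card_lex, Fintype.card_sum]
    rw [this]
    rw [hdimH, ← hr] at hQr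
    omega
  let bQ : Basis ι ℂ Q := basisOfTopLeSpanOfCardEqFinrank gQ hgQ_span hcardι
  have hbQ : ⇑bQ = gQ := coe_basisOfTopLeSpanOfCardEqFinrank _ _ _
  let dQ : ι → ℂ := fun i => Sum.elim (fun a => lam (ei a)) (fun b => lam (fe b) + 1) (ofLex i)
  have hxf : ∀ j : Fin r, ∃ u ∈ Submodule.span ℂ (f '' {m : Fin r | m < j}),
      x (f j) - (lam (fe j) + 1) • f j - u ∈ Submodule.span ℂ (Set.range e) := by
    intro j
    have hs := htriangular (fe j)
    have hsub : e '' {m : Fin k | m < fe j} ⊆ ⇑y '' (f '' {m : Fin r | m < j}) := by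
      rintro w ⟨m, hm, rfl⟩
      have hmj : (m : ℕ) < (j : ℕ) := hm
      have hmr : (m : ℕ) < r := lt_trans hmj j.2
      refine ⟨f ⟨(m : ℕ), hmr⟩, ⟨⟨(m : ℕ), hmr⟩, ?_, rfl⟩, ?_⟩
      · show ((m : ℕ) : ℕ) < (j : ℕ); exact hmj
      · rw [hyf]
    have hs' : x (e (fe j)) - lam (fe j) • e (fe j) ∈
        Submodule.map y (Submodule.span ℂ (f '' {m : Fin r | m < j})) := by
      rw [Submodule.map_span]
      exact Submodule.span_mono hsub hs
    obtain ⟨u, hu, hyu⟩ := hs'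
    refine ⟨u, hu, ?_⟩
    rw [he_span]
    show y (x (f j) - (lam (fe j) + 1) • f j - u) = 0
    rw [map_sub, map_sub, map_smul, hyx (f j), hyf j, hyu, add_smul, one_smul]
    abel
  have hQtri : ∀ i : ι, xQ (bQ i) - dQ i • bQ i ∈ Submodule.span ℂ (⇑bQ '' {j | j < i}) := by
    rw [hbQ]
    intro i
    obtain a | b := i
    · show xQ (π (e (ei a))) - lam (ei a) • π (e (ei a)) ∈ _
      rw [hπx, ← map_smul, ← map_sub]
      refine apply_mem_span π ?_ _ (htriangular (ei a))
      rintro w ⟨m, hm, rfl⟩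
      have hma : (m : ℕ) < r + (a : ℕ) := hm
      by_cases hmr : (m : ℕ) < r
      · rw [hπe0 m hmr]; exact zero_mem _
      · have h1 : m = ei ⟨(m : ℕ) - r, by have := m.2; omega⟩ := by
          apply Fin.ext; show (m : ℕ) = r + ((m : ℕ) - r); omega
        rw [h1]
        refine Submodule.subset_span ⟨toLex (Sum.inl ⟨(m : ℕ) - r, by have := m.2; omega⟩), ?_, rfl⟩
        simp only [Set.mem_setOf_eq]
        refine Sum.Lex.inl_lt_inl_iff.2 ?_
        show (m : ℕ) - r < (a : ℕ)
        omega
    · show xQ (π (f b)) - (lam (fe b) + 1) • π (f b) ∈ _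
      obtain ⟨u, hu, hw⟩ := hxf b
      have hsplit : xQ (π (f b)) - (lam (fe b) + 1) • π (f b) =
          π u + π (x (f b) - (lam (fe b) + 1) • f b - u) := by
        rw [hπx, ← map_smul, ← map_add, ← map_sub]
        congr 1
        abel
      rw [hsplit]
      refine add_mem ?_ ?_
      · refine apply_mem_span π ?_ _ hu
        rintro w ⟨m, hm, rfl⟩
        refine Submodule.subset_span ⟨toLex (Sum.inr m), ?_, rfl⟩
        simp only [Set.mem_setOf_eq]
        exact Sum.Lex.inr_lt_inr_iff.2 hm
      · refine apply_mem_span π ?_ _ hw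
        rintro w ⟨m, rfl⟩
        by_cases hmr : (m : ℕ) < r
        · rw [hπe0 m hmr]; exact zero_mem _
        · have h1 : m = ei ⟨(m : ℕ) - r, by have := m.2; omega⟩ := by
            apply Fin.ext; show (m : ℕ) = r + ((m : ℕ) - r); omega
          rw [h1]
          exact Submodule.subset_span ⟨toLex (Sum.inl ⟨(m : ℕ) - r, _⟩),
            Sum.Lex.inl_lt_inr _ _, rfl⟩
  -- surjectivity characterization
  have hsurj_iff1 : ∀ l : ℂ, Function.Surjective ⇑(y.coprod (x - l • (1 : H →ₗ[ℂ] H))) ↔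
      Function.Surjective ⇑(xQ - l • (1 : Q →ₗ[ℂ] Q)) := by
    intro l
    have hxQl : ∀ b : H, (xQ - l • (1 : Q →ₗ[ℂ] Q)) (π b) = π ((x - l • (1 : H →ₗ[ℂ] H)) b) := by
      intro b
      simp only [LinearMap.sub_apply, LinearMap.smul_apply, Module.End.one_apply]
      rw [hπx, ← map_smul, ← map_sub]
    constructor
    · intro h q
      obtain ⟨v, rfl⟩ := hπsurj q
      obtain ⟨⟨a, b⟩, hab⟩ := h v
      have hab' : y a + (x - l • (1 : H →ₗ[ℂ] H)) b = v := hab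
      refine ⟨π b, ?_⟩
      have h0 : π (y a) = 0 := (Submodule.Quotient.mk_eq_zero _).2 ⟨a, rfl⟩
      rw [hxQl, ← hab', map_add, h0, zero_add]
    · intro h v
      obtain ⟨q, hq⟩ := h (π v)
      obtain ⟨b, rfl⟩ := hπsurj q
      have hq' : π ((x - l • (1 : H →ₗ[ℂ] H)) b - v) = 0 := by
        rw [map_sub, ← hxQl, hq, sub_self]
      obtain ⟨a, ha⟩ := (Submodule.Quotient.mk_eq_zero _).1 hq'
      refine ⟨(-a, b), ?_⟩
      show y (-a) + (x - l • (1 : H →ₗ[ℂ] H)) b = v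
      rw [map_neg, ha]
      abel
  have hsurj_iff : ∀ l : ℂ, Function.Surjective ⇑(y.coprod (x - l • (1 : H →ₗ[ℂ] H))) ↔
      ∀ i : ι, dQ i ≠ l := by
    intro l
    rw [hsurj_iff1 l, ← det_ne_zero_iff_surjective, tri_det_shift bQ xQ dQ hQtri l,
      Finset.prod_ne_zero_iff]
    constructor
    · intro h i he
      exact (h i (Finset.mem_univ i)) (by rw [he, sub_self])
    · intro h i _
      exact sub_ne_zero.2 (h i)
  -- composition is zero and middle exactness
  have hcomp : ∀ l : ℂ, (y.coprod (x - l • (1 : H →ₗ[ℂ] H))) ∘ₗ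
      ((-(x - 1 - l • (1 : H →ₗ[ℂ] H))).prod y) = 0 := by
    intro l
    ext c
    simp only [LinearMap.comp_apply, LinearMap.prod_apply, Function.prod, LinearMap.coprod_apply,
      LinearMap.neg_apply, LinearMap.sub_apply, LinearMap.smul_apply, Module.End.one_apply,
      LinearMap.zero_apply, map_neg, map_sub, map_smul, hyx c]
    abel
  have hmid : ∀ l : ℂ, Function.Injective ⇑((-(x - 1 - l • (1 : H →ₗ[ℂ] H))).prod y) →
      Function.Surjective ⇑(y.coprod (x - l • (1 : H →ₗ[ℂ] H))) →
      LinearMap.ker (y.coprod (x - l • (1 : H →ₗ[ℂ] H))) =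
        LinearMap.range ((-(x - 1 - l • (1 : H →ₗ[ℂ] H))).prod y) := by
    intro l hI hS
    exact middle_of_inj_surj _ _ (hcomp l) hI hS (by rw [Module.finrank_prod])
  -- final set equality
  ext l
  simp only [Set.mem_setOf_eq, Set.mem_union, Set.mem_range]
  constructor
  · intro h
    by_cases hI : Function.Injective ⇑((-(x - 1 - l • (1 : H →ₗ[ℂ] H))).prod y)
    · by_cases hS : Function.Surjective ⇑(y.coprod (x - l • (1 : H →ₗ[ℂ] H)))
      · exact absurd ⟨hI, hmid l hI hS, hS⟩ h
      · rw [hsurj_iff l] at hS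
        push_neg at hS
        obtain ⟨i, hi⟩ := hS
        obtain a | b := i
        · refine Or.inl (Or.inr ⟨ei a, ?_, ?_⟩)
          · show r ≤ r + (a : ℕ); omega
          · exact (show lam (ei a) = l from hi).symm
        · refine Or.inr ⟨fe b, b.2, ?_⟩
          exact (show lam (fe b) + 1 = l from hi).symm
    · rw [hinj_iff l] at hI
      push_neg at hI
      obtain ⟨i, hi⟩ := hI
      exact Or.inl (Or.inl ⟨i, by rw [hi]; ring⟩)
  · intro h hc
    obtain ⟨hI, hM, hS⟩ := hc
    rcases h with (⟨i, hi⟩ | ⟨i, hge, hi⟩) | ⟨i, hlt, hi⟩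
    · exact (hinj_iff l).1 hI i (by rw [← hi]; ring)
    · have hik : (i : ℕ) - r < k - r := by have := i.2; omega
      refine (hsurj_iff l).1 hS (toLex (Sum.inl ⟨(i : ℕ) - r, hik⟩)) ?_
      show lam (ei ⟨(i : ℕ) - r, hik⟩) = l
      have heq : ei ⟨(i : ℕ) - r, hik⟩ = i := by
        apply Fin.ext; show r + ((i : ℕ) - r) = (i : ℕ); omega
      rw [heq, ← hi]
    · refine (hsurj_iff l).1 hS (toLex (Sum.inr ⟨(i : ℕ), hlt⟩)) ?_
      show lam (fe ⟨(i : ℕ), hlt⟩) + 1 = l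
      have heq : fe ⟨(i : ℕ), hlt⟩ = i := Fin.ext rfl
      rw [heq, ← hi]
end
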